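/- arXiv:math/9709205 — 6 statements merged into one kernel-verified Lean document; each statement's English description precedes it below -/
import Mathlib

section
/- Under the standing setup, and assuming in addition λ ≥ 2^ℵ₀: there is a function g : S' → ω such that for every club E of λ⁺ there are stationarily many δ ∈ S₁ ∩ S₂ such that e_δ ⊆ E and, for every n < ω, the set E ∩ δ ∩ g⁻¹({n}) is stationary in δ. -/
noncomputable section

/-- The order type of a set of ordinals (meaningful when `C` is small, i.e. bounded). -/
noncomputable def otp (C : Set Ordinal.{0}) : Ordinal.{0} := by
  classical
  exact if h : Small.{0} C then
    letI := h
    haveI : IsWellOrder (Shrink C)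
        (fun x y => ((equivShrink C).symm x : Ordinal) < ((equivShrink C).symm y : Ordinal)) :=
      RelEmbedding.isWellOrder
        (⟨⟨fun x => ((equivShrink C).symm x : Ordinal),
            fun a b hab => (equivShrink C).symm.injective (Subtype.coe_injective hab)⟩,
          Iff.rfl⟩ :
          (fun x y : Shrink C =>
              ((equivShrink C).symm x : Ordinal) < ((equivShrink C).symm y : Ordinal)) ↪r
            ((· < ·) : Ordinal → Ordinal → Prop))
    Ordinal.type
      (fun x y : Shrink C =>
        ((equivShrink C).symm x : Ordinal) < ((equivShrink C).symm y : Ordinal))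
  else 0

/-- `C` is closed in `δ`: any supremum of a nonempty subset of `C` that is `< δ` lies in `C`. -/
def IsClosedIn (C : Set Ordinal.{0}) (δ : Ordinal.{0}) : Prop :=
  ∀ s ⊆ C, s.Nonempty → sSup s < δ → sSup s ∈ C

/-- `C` is a club (closed unbounded) subset of `δ`. -/
def IsClubIn (C : Set Ordinal.{0}) (δ : Ordinal.{0}) : Prop :=
  C ⊆ Set.Iio δ ∧ (∀ β < δ, ∃ γ ∈ C, β ≤ γ) ∧ IsClosedIn C δ

/-- `S` is stationary in `δ`: it meets every club of `δ`. -/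
def IsStationaryIn (S : Set Ordinal.{0}) (δ : Ordinal.{0}) : Prop :=
  ∀ C, IsClubIn C δ → (S ∩ C).Nonempty

/-- The accumulation points of `C` that belong to `C`. -/
def accSet (C : Set Ordinal.{0}) : Set Ordinal.{0} :=
  {β ∈ C | β = sSup (C ∩ Set.Iio β)}

/-- The non-accumulation points of `C`. -/
def naccSet (C : Set Ordinal.{0}) : Set Ordinal.{0} := C \ accSet C

/-- `S_κ^δ`: the set of ordinals below `δ` of cofinality `κ`. -/
def cofSet (κ : Cardinal.{0}) (δ : Ordinal.{0}) : Set Ordinal.{0} :=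
  {α | α < δ ∧ α.cof = κ}

namespace ShAux

open Set Ordinal Cardinal

lemma bdd_of_subset_Iio {C : Set Ordinal.{0}} {δ : Ordinal.{0}} (h : C ⊆ Set.Iio δ) :
    BddAbove C := ⟨δ, fun x hx => (h hx).le⟩

lemma stationary_mono {X Y : Set Ordinal.{0}} {δ : Ordinal.{0}} (hXY : X ⊆ Y)
    (hX : IsStationaryIn X δ) : IsStationaryIn Y δ := by
  intro C hC
  obtain ⟨x, hx1, hx2⟩ := hX C hC
  exact ⟨x, hXY hx1, hx2⟩

lemma isClubIn_Iio {δ : Ordinal.{0}} : IsClubIn (Set.Iio δ) δ :=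
  ⟨le_refl _, fun β hβ => ⟨β, hβ, le_refl _⟩, fun _ _ _ h => h⟩

lemma isClubIn_Ioi {γ δ : Ordinal.{0}} (hδ : Order.IsSuccLimit δ) (hγ : γ < δ) :
    IsClubIn {x | γ < x ∧ x < δ} δ := by
  refine ⟨fun x hx => hx.2, fun β hβ => ?_, ?_⟩
  · refine ⟨max (γ + 1) β, ⟨?_, ?_⟩, le_max_right _ _⟩
    · exact lt_of_lt_of_le (lt_add_one γ) (le_max_left _ _)
    · exact max_lt (by rw [Ordinal.add_one_eq_succ]; exact hδ.succ_lt hγ) hβ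
  · intro s hs hne hlt
    obtain ⟨x, hx⟩ := hne
    exact ⟨lt_of_lt_of_le (hs hx).1 (le_csSup (bdd_of_subset_Iio fun y hy => (hs hy).2) hx), hlt⟩

lemma isClubIn_iInter {δ : Ordinal.{0}} (hδ : Order.IsSuccLimit δ) (hcof : Cardinal.aleph0 < δ.cof)
    {ι : Type} (D : ι → Set Ordinal.{0}) (hD : ∀ i, IsClubIn (D i) δ)
    (hcard : #ι < δ.cof) : IsClubIn (Set.Iio δ ∩ ⋂ i, D i) δ := by
  classical
  have hpick : ∀ (i : ι) (x : Ordinal), ∃ y, x < δ → y ∈ D i ∧ x ≤ y ∧ y < δ := by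
    intro i x
    by_cases hx : x < δ
    · obtain ⟨y, hy1, hy2⟩ := (hD i).2.1 x hx
      exact ⟨y, fun _ => ⟨hy1, hy2, (hD i).1 hy1⟩⟩
    · exact ⟨0, fun h => absurd h hx⟩
  choose pick hpick using hpick
  refine ⟨fun x hx => hx.1, ?_, ?_⟩
  · -- unboundedness
    intro β hβ
    -- iterate
    let X : ℕ → Ordinal := fun n => Nat.rec β (fun _ x => max (x + 1) (⨆ i, pick i x)) n
    have hXsucc : ∀ n, X (n + 1) = max (X n + 1) (⨆ i, pick i (X n)) := fun n => rfl
    have hXlt : ∀ n, X n < δ := by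
      intro n
      induction n with
      | zero => exact hβ
      | succ n ih =>
        rw [hXsucc]
        refine max_lt (by rw [Ordinal.add_one_eq_succ]; exact hδ.succ_lt ih) (Ordinal.iSup_lt_ord hcard fun i => ((hpick i (X n)) ih).2.2)
    have hXmono : ∀ n, X n < X (n + 1) := by
      intro n
      rw [hXsucc]
      exact lt_of_lt_of_le (lt_add_one _) (le_max_left _ _)
    have hXle : ∀ n, X n ≤ X (n + 1) := fun n => (hXmono n).le
    set y := ⨆ n, X n with hy
    have hyδ : y < δ := by
      refine Ordinal.iSup_lt_ord ?_ hXlt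
      rw [Cardinal.mk_nat]; exact hcof
    have hXley : ∀ n, X n ≤ y := fun n => Ordinal.le_iSup X n
    have hymem : ∀ i, y ∈ D i := by
      intro i
      have hsub : Set.range (fun n => pick i (X n)) ⊆ D i := by
        rintro _ ⟨n, rfl⟩; exact (hpick i (X n) (hXlt n)).1
      have hsup : sSup (Set.range fun n => pick i (X n)) = y := by
        apply le_antisymm
        · apply csSup_le (Set.range_nonempty _)
          rintro _ ⟨n, rfl⟩
          refine le_trans ?_ (hXley (n + 1))
          rw [hXsucc]
          exact le_trans (Ordinal.le_iSup (fun j => pick j (X n)) i) (le_max_right _ _)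
        · apply csSup_le (Set.range_nonempty _)
          rintro _ ⟨n, rfl⟩
          exact le_trans (hpick i (X n) (hXlt n)).2.1
            (le_csSup (Ordinal.bddAbove_range _) ⟨n, rfl⟩)
      have := (hD i).2.2 _ hsub ⟨_, ⟨0, rfl⟩⟩ (by rw [hsup]; exact hyδ)
      rwa [hsup] at this
    refine ⟨y, ⟨hyδ, Set.mem_iInter.2 hymem⟩, le_trans (by exact le_rfl : β ≤ X 0) (hXley 0)⟩
  · -- closedness
    intro s hs hne hlt
    refine ⟨hlt, Set.mem_iInter.2 fun i => ?_⟩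
    exact (hD i).2.2 s (fun x hx => (Set.mem_iInter.1 (hs hx).2) i) hne hlt

lemma IsClubIn.inter {δ : Ordinal.{0}} {A B : Set Ordinal.{0}} (hδ : Order.IsSuccLimit δ)
    (hcof : Cardinal.aleph0 < δ.cof) (hA : IsClubIn A δ) (hB : IsClubIn B δ) :
    IsClubIn (A ∩ B) δ := by
  have h2 : (2 : Cardinal.{0}) < δ.cof := lt_trans (Cardinal.nat_lt_aleph0 2) hcof
  have := isClubIn_iInter hδ hcof (fun b : Bool => bif b then A else B)
    (by intro b; cases b <;> simpa) (by simpa using h2)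
  have heq : Set.Iio δ ∩ ⋂ b : Bool, (bif b then A else B) = A ∩ B := by
    ext x
    simp only [Set.mem_inter_iff, Set.mem_iInter, Bool.forall_bool, cond_false, cond_true,
      Set.mem_Iio]
    constructor
    · rintro ⟨_, h1, h2⟩; exact ⟨h2, h1⟩
    · rintro ⟨h1, h2⟩; exact ⟨hA.1 h1, h2, h1⟩
  rwa [heq] at this

end ShAux

namespace ShAux

open Set Ordinal Cardinal

variable {C D : Set Ordinal.{0}} {x y δ : Ordinal.{0}}

/-- the shrunk membership relation on a small set of ordinals -/
def srel (C : Set Ordinal.{0}) [Small.{0} C] : Shrink C → Shrink C → Prop :=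
  fun x y => ((equivShrink C).symm x : Ordinal) < ((equivShrink C).symm y : Ordinal)

instance srel_isWellOrder (C : Set Ordinal.{0}) [Small.{0} C] :
    IsWellOrder (Shrink C) (srel C) :=
  RelEmbedding.isWellOrder
    (⟨⟨fun x => ((equivShrink C).symm x : Ordinal),
        fun a b hab => (equivShrink C).symm.injective (Subtype.coe_injective hab)⟩,
      Iff.rfl⟩ :
      (srel C) ↪r ((· < ·) : Ordinal → Ordinal → Prop))

lemma otp_eq_type (C : Set Ordinal.{0}) [h : Small.{0} C] :
    otp C = Ordinal.type (srel C) := by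
  simp only [otp]
  rw [dif_pos h]
  rfl

lemma otp_inter_Iio [Small.{0} C] (hx : x ∈ C) :
    otp (C ∩ Set.Iio x) = Ordinal.typein (srel C) (equivShrink C ⟨x, hx⟩) := by
  haveI : Small.{0} (C ∩ Set.Iio x : Set Ordinal) := small_subset Set.inter_subset_left
  rw [otp_eq_type, ← Ordinal.type_subrel]
  refine Ordinal.type_eq.2 ⟨?_⟩
  set a := equivShrink C ⟨x, hx⟩ with ha
  have key : ∀ b : Shrink C, srel C b a ↔ ((equivShrink C).symm b : Ordinal) < x := by
    intro b
    unfold srel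
    rw [ha, Equiv.symm_apply_apply]
  let E : ↥(C ∩ Set.Iio x) ≃ {b : Shrink C // srel C b a} :=
    { toFun := fun p => ⟨equivShrink C ⟨(p : Ordinal), p.2.1⟩, by
        rw [key, Equiv.symm_apply_apply]
        exact p.2.2⟩
      invFun := fun b => ⟨((equivShrink C).symm b.1 : Ordinal),
        ⟨((equivShrink C).symm b.1).2, (key b.1).1 b.2⟩⟩
      left_inv := fun p => by
        ext
        simp only [Equiv.symm_apply_apply]
      right_inv := fun b => by
        ext
        simp only [Subtype.coe_eta, Equiv.apply_symm_apply] }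
  refine ⟨(equivShrink (C ∩ Set.Iio x : Set Ordinal)).symm.trans E, ?_⟩
  intro p q
  show Subrel (srel C) _ (E _) (E _) ↔ srel _ p q
  rw [subrel_val]
  show srel C (equivShrink C _) (equivShrink C _) ↔ _
  unfold srel
  rw [Equiv.symm_apply_apply, Equiv.symm_apply_apply]

end ShAux

namespace ShAux

open Set Ordinal Cardinal

variable {C D : Set Ordinal.{0}} {x y z δ ι : Ordinal.{0}}

lemma otp_lt_of_mem [Small.{0} C] (hx : x ∈ C) : otp (C ∩ Set.Iio x) < otp C := by
  rw [otp_inter_Iio hx, otp_eq_type]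
  exact Ordinal.typein_lt_type _ _

lemma otp_mono_subset (h : C ⊆ D) [Small.{0} D] : otp C ≤ otp D := by
  haveI : Small.{0} C := small_subset h
  rw [otp_eq_type, otp_eq_type]
  refine RelEmbedding.ordinal_type_le
    ⟨⟨fun p => equivShrink D ⟨((equivShrink C).symm p : Ordinal), h ((equivShrink C).symm p).2⟩,
      ?_⟩, ?_⟩
  · intro p q hpq
    have := congrArg (fun t => (((equivShrink D).symm t : ↥D) : Ordinal)) hpq
    simp only [Equiv.symm_apply_apply] at this
    exact (equivShrink C).symm.injective (Subtype.coe_injective this)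
  · intro p q
    show ((equivShrink D).symm (equivShrink D _) : Ordinal) <
        ((equivShrink D).symm (equivShrink D _) : Ordinal) ↔ _
    rw [Equiv.symm_apply_apply, Equiv.symm_apply_apply]
    exact Iff.rfl

lemma otp_inter_lt_inter [Small.{0} C] (hx : x ∈ C) (hy : y ∈ C) (hxy : x < y) :
    otp (C ∩ Set.Iio x) < otp (C ∩ Set.Iio y) := by
  haveI : Small.{0} (C ∩ Set.Iio y : Set Ordinal) := small_subset Set.inter_subset_left
  have hxmem : x ∈ C ∩ Set.Iio y := ⟨hx, hxy⟩
  have hset : (C ∩ Set.Iio y) ∩ Set.Iio x = C ∩ Set.Iio x := by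
    ext t
    constructor
    · rintro ⟨⟨h1, _⟩, h3⟩; exact ⟨h1, h3⟩
    · rintro ⟨h1, h2⟩; exact ⟨⟨h1, lt_trans h2 hxy⟩, h2⟩
  have := otp_lt_of_mem (C := C ∩ Set.Iio y) hxmem
  rwa [hset] at this

lemma otp_inter_le_of_le [Small.{0} C] (hxy : x ≤ y) :
    otp (C ∩ Set.Iio x) ≤ otp (C ∩ Set.Iio y) := by
  haveI : Small.{0} (C ∩ Set.Iio y : Set Ordinal) := small_subset Set.inter_subset_left
  exact otp_mono_subset (Set.inter_subset_inter_right _ (Set.Iio_subset_Iio hxy))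

lemma otp_inter_reflect [Small.{0} C] (hx : x ∈ C) (hy : y ∈ C)
    (h : otp (C ∩ Set.Iio x) ≤ otp (C ∩ Set.Iio y)) : x ≤ y := by
  by_contra hc
  push_neg at hc
  exact absurd h (not_le.2 (otp_inter_lt_inter hy hx hc))

lemma otp_surj [Small.{0} C] (h : ι < otp C) : ∃ x, ∃ hx : x ∈ C, otp (C ∩ Set.Iio x) = ι := by
  rw [otp_eq_type] at h
  obtain ⟨a, ha⟩ := Ordinal.typein_surj (srel C) h
  refine ⟨((equivShrink C).symm a : Ordinal), ((equivShrink C).symm a).2, ?_⟩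
  rw [otp_inter_Iio ((equivShrink C).symm a).2]
  rw [Subtype.coe_eta, Equiv.apply_symm_apply]
  exact ha

lemma otp_cont [Small.{0} C] {s : Set Ordinal.{0}} (hbddC : BddAbove C) (hs : s ⊆ C)
    (hne : s.Nonempty) (hσ : sSup s ∈ C) :
    otp (C ∩ Set.Iio (sSup s)) = sSup ((fun α => otp (C ∩ Set.Iio α)) '' s) := by
  have hbdds : BddAbove s := hbddC.mono hs
  apply le_antisymm
  · apply le_of_forall_lt
    intro c hc
    haveI : Small.{0} (C ∩ Set.Iio (sSup s) : Set Ordinal) := small_subset Set.inter_subset_left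
    obtain ⟨x, hx, hxval⟩ := otp_surj (C := C ∩ Set.Iio (sSup s)) hc
    have hset : (C ∩ Set.Iio (sSup s)) ∩ Set.Iio x = C ∩ Set.Iio x := by
      ext t
      constructor
      · rintro ⟨⟨h1, _⟩, h3⟩; exact ⟨h1, h3⟩
      · rintro ⟨h1, h2⟩
        exact ⟨⟨h1, Set.mem_Iio.2 (lt_trans (Set.mem_Iio.1 h2) (Set.mem_Iio.1 hx.2))⟩, h2⟩
    rw [hset] at hxval
    obtain ⟨w, hws, hxw⟩ := exists_lt_of_lt_csSup hne hx.2
    calc c = otp (C ∩ Set.Iio x) := hxval.symm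
    _ < otp (C ∩ Set.Iio w) := otp_inter_lt_inter hx.1 (hs hws) hxw
    _ ≤ sSup ((fun α => otp (C ∩ Set.Iio α)) '' s) :=
        le_csSup ⟨otp C, by rintro _ ⟨u, hu, rfl⟩; exact (otp_lt_of_mem (hs hu)).le⟩
          ⟨w, hws, rfl⟩
  · apply csSup_le (hne.image _)
    rintro _ ⟨w, hws, rfl⟩
    exact otp_inter_le_of_le (le_csSup hbdds hws)

end ShAux

namespace ShAux

open Set Ordinal Cardinal

variable {C : Set Ordinal.{0}} {δ : Ordinal.{0}}

lemma club_small (hC : IsClubIn C δ) : Small.{0} C :=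
  small_subset hC.1

/-- push a stationary set through the collapse of a club -/
lemma stat_image (hC : IsClubIn C δ) {X : Set Ordinal.{0}} (hX : X ⊆ C)
    (hstat : IsStationaryIn X δ) :
    IsStationaryIn ((fun α => otp (C ∩ Set.Iio α)) '' X) (otp C) := by
  haveI : Small.{0} C := club_small hC
  intro D hD
  set D' : Set Ordinal.{0} := {α | α ∈ C ∧ otp (C ∩ Set.Iio α) ∈ D} with hD'
  have hclub : IsClubIn D' δ := by
    refine ⟨fun α hα => hC.1 hα.1, ?_, ?_⟩
    · intro β hβ
      obtain ⟨γ₀, hγ₀C, hβγ₀⟩ := hC.2.1 β hβ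
      obtain ⟨η, hηD, hγ₀η⟩ := hD.2.1 _ (otp_lt_of_mem hγ₀C)
      obtain ⟨x, hxC, hxval⟩ := otp_surj (hD.1 hηD)
      refine ⟨x, ⟨hxC, by rwa [hxval]⟩, ?_⟩
      exact le_trans hβγ₀ (otp_inter_reflect hγ₀C hxC (by rw [hxval]; exact hγ₀η))
    · intro s hs hne hlt
      have hsC : s ⊆ C := fun x hx => (hs hx).1
      have hσC : sSup s ∈ C := hC.2.2 s hsC hne hlt
      have hcont := otp_cont (C := C) (bdd_of_subset_Iio hC.1) hsC hne hσC
      refine ⟨hσC, ?_⟩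
      rw [hcont]
      have himg : (fun α => otp (C ∩ Set.Iio α)) '' s ⊆ D := by
        rintro _ ⟨u, hu, rfl⟩; exact (hs hu).2
      exact hD.2.2 _ himg (hne.image _) (by rw [← hcont]; exact otp_lt_of_mem hσC)
  obtain ⟨x, hxX, hxD'⟩ := hstat D' hclub
  exact ⟨_, ⟨x, hxX, rfl⟩, hxD'.2⟩

/-- pull a stationary set back through the collapse of a club -/
lemma stat_preimage (hδ : Order.IsSuccLimit δ) (hcof : Cardinal.aleph0 < δ.cof) (hC : IsClubIn C δ)
    {Y : Set Ordinal.{0}} (hY : IsStationaryIn Y (otp C)) :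
    IsStationaryIn {α | α ∈ C ∧ otp (C ∩ Set.Iio α) ∈ Y} δ := by
  haveI : Small.{0} C := club_small hC
  intro d hd
  have hd' : IsClubIn (d ∩ C) δ := IsClubIn.inter hδ hcof hd hC
  set D : Set Ordinal.{0} := (fun α => otp (C ∩ Set.Iio α)) '' (d ∩ C) with hDdef
  have hDclub : IsClubIn D (otp C) := by
    refine ⟨?_, ?_, ?_⟩
    · rintro _ ⟨u, hu, rfl⟩; exact otp_lt_of_mem hu.2
    · intro η hη
      obtain ⟨x, hxC, hxval⟩ := otp_surj hη
      obtain ⟨γ, hγ, hxγ⟩ := hd'.2.1 x (hC.1 hxC)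
      exact ⟨_, ⟨γ, hγ, rfl⟩, by rw [← hxval]; exact otp_inter_le_of_le hxγ⟩
    · intro s hs hne hlt
      set s₀ : Set Ordinal.{0} := {α | α ∈ d ∩ C ∧ otp (C ∩ Set.Iio α) ∈ s} with hs₀def
      have hs₀sub : s₀ ⊆ d ∩ C := fun x hx => hx.1
      have himg : (fun α => otp (C ∩ Set.Iio α)) '' s₀ = s := by
        apply Set.Subset.antisymm
        · rintro _ ⟨u, hu, rfl⟩; exact hu.2
        · intro y hy
          obtain ⟨u, hu, huy⟩ := hs hy
          dsimp only at huy
          exact ⟨u, ⟨hu, by rwa [huy]⟩, huy⟩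
      have hs₀ne : s₀.Nonempty := by
        obtain ⟨y, hy⟩ := hne
        obtain ⟨u, hu, huy⟩ := hs hy
        dsimp only at huy
        exact ⟨u, hu, by rwa [huy]⟩
      obtain ⟨xs, hxsC, hxsval⟩ := otp_surj hlt
      have hsIio : s ⊆ Set.Iio (otp C) := by
        intro z hz
        obtain ⟨u, hu, huz⟩ := hs hz
        dsimp only at huz
        rw [← huz]
        exact otp_lt_of_mem hu.2
      have hσ₀le : sSup s₀ ≤ xs := by
        apply csSup_le hs₀ne
        intro u hu
        refine otp_inter_reflect hu.1.2 hxsC ?_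
        rw [hxsval]
        exact le_csSup (bdd_of_subset_Iio hsIio) hu.2
      have hσ₀δ : sSup s₀ < δ := lt_of_le_of_lt hσ₀le (hC.1 hxsC)
      have hσ₀d' : sSup s₀ ∈ d ∩ C := hd'.2.2 s₀ hs₀sub hs₀ne hσ₀δ
      have hcont := otp_cont (C := C) (bdd_of_subset_Iio hC.1)
        (fun x hx => hx.1.2) hs₀ne hσ₀d'.2
      rw [himg] at hcont
      rw [← hcont]
      exact ⟨sSup s₀, hσ₀d', rfl⟩
  obtain ⟨y, hyY, hyD⟩ := hY D hDclub
  obtain ⟨u, hu, huy⟩ := hyD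
  dsimp only at huy
  exact ⟨u, ⟨hu.2, by rwa [huy]⟩, hu.1⟩

lemma not_stationary {S : Set Ordinal.{0}} {δ : Ordinal.{0}} (h : ¬ IsStationaryIn S δ) :
    ∃ Cl, IsClubIn Cl δ ∧ S ∩ Cl = ∅ := by
  unfold IsStationaryIn at h
  push_neg at h
  obtain ⟨Cl, h1, h2⟩ := h
  exact ⟨Cl, h1, h2⟩

/-- the cofinality of `δ` is at most the cardinality of the order type of a club -/
lemma cof_le_card_otp (hC : IsClubIn C δ) (hδ : Order.IsSuccLimit δ) : δ.cof ≤ (otp C).card := by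
  haveI : Small.{0} C := club_small hC
  classical
  have hsurj : ∀ η < otp C, ∃ x, ∃ _ : x ∈ C, otp (C ∩ Set.Iio x) = η := fun η hη => otp_surj hη
  set f : (otp C).ToType → Ordinal.{0} := fun t =>
    if h : ∃ x, ∃ _ : x ∈ C, otp (C ∩ Set.Iio x) =
        (((ToType.mk (o := (otp C))).symm t : Set.Iio (otp C)) : Ordinal)
      then h.choose else 0 with hf
  have hfC : ∀ t, f t ∈ C ∧ otp (C ∩ Set.Iio (f t)) =
      (((ToType.mk (o := (otp C))).symm t : Set.Iio (otp C)) : Ordinal) := by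
    intro t
    have hlt : (((ToType.mk (o := (otp C))).symm t : Set.Iio (otp C)) : Ordinal) < otp C :=
      ((ToType.mk (o := (otp C))).symm t).2
    have hex : ∃ x, ∃ _ : x ∈ C, otp (C ∩ Set.Iio x) =
        (((ToType.mk (o := (otp C))).symm t : Set.Iio (otp C)) : Ordinal) := hsurj _ hlt
    rw [hf]
    dsimp only
    rw [dif_pos hex]
    exact ⟨hex.choose_spec.choose, hex.choose_spec.choose_spec⟩
  have hδeq : δ = Ordinal.lsub.{0,0} f := by
    apply le_antisymm
    · apply le_of_forall_lt
      intro β hβ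
      obtain ⟨γ, hγC, hβγ⟩ := hC.2.1 β hβ
      have hγlt : otp (C ∩ Set.Iio γ) < otp C := otp_lt_of_mem hγC
      set t := ToType.mk (o := (otp C)) ⟨_, hγlt⟩ with ht
      have : f t = γ := by
        have h2 := hfC t
        rw [ht, OrderIso.symm_apply_apply] at h2
        exact le_antisymm (otp_inter_reflect h2.1 hγC (le_of_eq h2.2))
          (otp_inter_reflect hγC h2.1 (ge_of_eq h2.2))
      calc β ≤ γ := hβγ
      _ < Ordinal.lsub.{0,0} f := by rw [← this]; exact Ordinal.lt_lsub _ _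
    · apply Ordinal.lsub_le
      intro t
      exact hC.1 (hfC t).1
  calc δ.cof = (Ordinal.lsub.{0,0} f).cof := by rw [← hδeq]
  _ ≤ #((otp C).ToType) := Ordinal.cof_lsub_le f
  _ = (otp C).card := Cardinal.mk_toType _

end ShAux

namespace ShAux

open Set Ordinal Cardinal

/-- least index of a ladder point above `x` -/
noncomputable def cvalOf (ℓ : ℕ → Ordinal.{0}) (x : Ordinal.{0}) : ℕ := by
  classical
  exact if h : ∃ k, x ≤ ℓ k then Nat.find h else 0

lemma cvalOf_spec {ℓ : ℕ → Ordinal.{0}} {x : Ordinal.{0}} (h : ∃ k, x ≤ ℓ k) :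
    x ≤ ℓ (cvalOf ℓ x) ∧ ∀ j, j < cvalOf ℓ x → ¬ x ≤ ℓ j := by
  classical
  simp only [cvalOf]
  rw [dif_pos h]
  exact ⟨Nat.find_spec h, fun j hj => Nat.find_min h hj⟩

/-- the partial inverse of the Ulam injections -/
noncomputable def GOf (inj : Ordinal.{0} → Ordinal.{0} → Ordinal.{0}) (ξ β : Ordinal.{0}) :
    Ordinal.{0} := by
  classical
  exact if h : ∃ γ, γ < β ∧ inj β γ = ξ then h.choose else 0

lemma GOf_eq {inj : Ordinal.{0} → Ordinal.{0} → Ordinal.{0}} {ξ β γ : Ordinal.{0}}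
    (hinjOn : Set.InjOn (inj β) (Set.Iio β)) (hγ : γ < β) (hval : inj β γ = ξ) :
    GOf inj ξ β = γ := by
  classical
  have h : ∃ γ, γ < β ∧ inj β γ = ξ := ⟨γ, hγ, hval⟩
  simp only [GOf]
  rw [dif_pos h]
  exact hinjOn h.choose_spec.1 hγ (by rw [h.choose_spec.2, hval])

lemma exists_inj {β ν : Ordinal.{0}} (hβν : β.card ≤ ν.card) :
    ∃ f : Ordinal.{0} → Ordinal.{0}, (∀ γ, γ < β → f γ < ν) ∧ Set.InjOn f (Set.Iio β) := by
  classical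
  have hmk : #(Set.Iio β) ≤ #(Set.Iio ν) := by
    rw [Ordinal.mk_Iio_ordinal, Ordinal.mk_Iio_ordinal]
    exact Cardinal.lift_le.2 hβν
  obtain ⟨e⟩ := Cardinal.le_def _ _ |>.1 hmk
  refine ⟨fun γ => if h : γ < β then (e ⟨γ, h⟩ : Ordinal) else 0, ?_, ?_⟩
  · intro γ hγ
    dsimp only
    rw [dif_pos hγ]
    exact (e ⟨γ, hγ⟩).2
  · intro γ₁ h₁ γ₂ h₂ heq
    rw [Set.mem_Iio] at h₁ h₂
    dsimp only at heq
    rw [dif_pos h₁, dif_pos h₂] at heq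
    have := e.injective (Subtype.coe_injective heq)
    exact congrArg Subtype.val this

/-- The key combinatorial lemma: from the fixed (Ulam + ladder) data one can always
find an index whose induced colouring splits a given stationary set into
`ω` many stationary pieces. -/
lemma crux {ν κ' : Ordinal.{0}} (hκlim : Order.IsSuccLimit κ')
    (hcof1 : Cardinal.aleph0 < κ'.cof) (hcof2 : ν.card < κ'.cof)
    (inj : Ordinal.{0} → Ordinal.{0} → Ordinal.{0})
    (hinj : ∀ β, β < κ' → (∀ γ, γ < β → inj β γ < ν) ∧ Set.InjOn (inj β) (Set.Iio β))
    (ladder : Ordinal.{0} → ℕ → Ordinal.{0})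
    (hladder : ∀ ρ, (∃ f : ℕ → Ordinal.{0}, (∀ k, f k < ρ) ∧ ∀ x, x < ρ → ∃ k, x ≤ f k) →
      (∀ k, ladder ρ k < ρ) ∧ ∀ x, x < ρ → ∃ k, x ≤ ladder ρ k)
    {W : Set Ordinal.{0}} (hW : IsStationaryIn W κ') (hWsub : W ⊆ Set.Iio κ') :
    ∃ ξ ρ, ξ < ν ∧ ρ < κ' ∧ ∃ h : ℕ → ℕ, ∀ n : ℕ,
      IsStationaryIn {β | β ∈ W ∧ h (cvalOf (ladder ρ) (GOf inj ξ β)) = n} κ' := by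
  classical
  -- Step 1 : stationary fibres
  have hstep1 : ∀ γ, γ < κ' → ∃ ξ, ξ < ν ∧
      IsStationaryIn {β | β ∈ W ∧ γ < β ∧ inj β γ = ξ} κ' := by
    intro γ hγ
    by_contra hno
    push_neg at hno
    have hno' : ∀ ξ, ξ < ν → ∃ Cl, IsClubIn Cl κ' ∧
        {β | β ∈ W ∧ γ < β ∧ inj β γ = ξ} ∩ Cl = ∅ := by
      intro ξ hξ
      have := hno ξ hξ
      unfold IsStationaryIn at this
      push_neg at this
      obtain ⟨Cl, hCl, hCl2⟩ := this
      exact ⟨Cl, hCl, hCl2⟩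
    choose! Dfun hDclub hDdisj using hno'
    set A : Set Ordinal.{0} := Set.Iio κ' ∩
      ⋂ t : ν.ToType, Dfun ((ToType.mk (o := ν)).symm t : Set.Iio ν) with hA
    have hAclub : IsClubIn A κ' := by
      refine isClubIn_iInter hκlim hcof1 _ (fun t => ?_) ?_
      · exact hDclub _ ((ToType.mk (o := ν)).symm t).2
      · rw [Cardinal.mk_toType]
        exact hcof2
    have hBclub : IsClubIn {x | γ < x ∧ x < κ'} κ' := isClubIn_Ioi hκlim hγ
    obtain ⟨β, hβW, hβA, hβB⟩ := hW _ (IsClubIn.inter hκlim hcof1 hAclub hBclub)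
    have hβκ : β < κ' := hβB.2
    have hξβ : inj β γ < ν := (hinj β hβκ).1 γ hβB.1
    have hmem : β ∈ Dfun (inj β γ) := by
      have := Set.mem_iInter.1 hβA.2 (ToType.mk (o := ν) ⟨inj β γ, hξβ⟩)
      rwa [OrderIso.symm_apply_apply] at this
    exact Set.eq_empty_iff_forall_notMem.1 (hDdisj (inj β γ) hξβ) β
      ⟨⟨hβW, hβB.1, rfl⟩, hmem⟩
  choose! ξsel hξlt hξstat using hstep1
  -- Step 2 : a fibre of the selector is unbounded
  have hstep2 : ∃ ξ', ξ' < ν ∧ ∀ β, β < κ' → ∃ γ, γ < κ' ∧ ξsel γ = ξ' ∧ β < γ := by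
    by_contra hno
    push_neg at hno
    have hno' : ∀ ξ, ξ < ν → ∃ b, b < κ' ∧ ∀ γ, γ < κ' → ξsel γ = ξ → γ ≤ b := by
      intro ξ hξ
      obtain ⟨b, hb, hb2⟩ := hno ξ hξ
      exact ⟨b, hb, hb2⟩
    choose! bound hboundlt hbound using hno'
    set B : Ordinal.{0} := ⨆ t : ν.ToType,
      bound ((ToType.mk (o := ν)).symm t : Set.Iio ν) with hB
    have hBκ : B < κ' := by
      refine Ordinal.iSup_lt_ord ?_ fun t => hboundlt _ ((ToType.mk (o := ν)).symm t).2
      rw [Cardinal.mk_toType]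
      exact hcof2
    have hsBκ : Order.succ B < κ' := hκlim.succ_lt hBκ
    have h1 : Order.succ B ≤ bound (ξsel (Order.succ B)) :=
      hbound _ (hξlt _ hsBκ) _ hsBκ rfl
    have h2 : bound (ξsel (Order.succ B)) ≤ B := by
      have hξ : ξsel (Order.succ B) < ν := hξlt _ hsBκ
      have := Ordinal.le_iSup (fun t : ν.ToType =>
        bound ((ToType.mk (o := ν)).symm t : Set.Iio ν)) (ToType.mk (o := ν) ⟨_, hξ⟩)
      rwa [OrderIso.symm_apply_apply] at this
    exact absurd (le_trans h1 h2) (not_le.2 (Order.lt_succ B))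
  obtain ⟨ξ', hξ'ν, hunb⟩ := hstep2
  -- Step 3 : an ω-chain through the fibre
  set Fstep : {x : Ordinal.{0} // x < κ' ∧ ξsel x = ξ'} →
      {x : Ordinal.{0} // x < κ' ∧ ξsel x = ξ'} := fun p =>
    ⟨(hunb p.1 p.2.1).choose, (hunb p.1 p.2.1).choose_spec.1,
      (hunb p.1 p.2.1).choose_spec.2.1⟩ with hFstep
  set F : ℕ → {x : Ordinal.{0} // x < κ' ∧ ξsel x = ξ'} := fun k =>
    Nat.rec ⟨(hunb 0 hκlim.pos).choose, (hunb 0 hκlim.pos).choose_spec.1,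
      (hunb 0 hκlim.pos).choose_spec.2.1⟩ (fun _ p => Fstep p) k with hF
  have hFsucc : ∀ k, F (k + 1) = Fstep (F k) := fun k => rfl
  set f : ℕ → Ordinal.{0} := fun k => (F k).1 with hfdef
  have hfκ : ∀ k, f k < κ' := fun k => (F k).2.1
  have hfξ : ∀ k, ξsel (f k) = ξ' := fun k => (F k).2.2
  have hfmono : ∀ k, f k < f (k + 1) := by
    intro k
    have h1 : f (k + 1) = (Fstep (F k)).1 := rfl
    rw [h1, hFstep]
    exact (hunb (F k).1 (F k).2.1).choose_spec.2.2
  set ρ : Ordinal.{0} := ⨆ k, f k with hρ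
  have hρκ : ρ < κ' := by
    refine Ordinal.iSup_lt_ord ?_ hfκ
    rw [Cardinal.mk_nat]
    exact hcof1
  have hfltρ : ∀ k, f k < ρ := fun k => lt_of_lt_of_le (hfmono k) (Ordinal.le_iSup f (k + 1))
  have hρcof : ∀ x, x < ρ → ∃ k, x ≤ f k := by
    intro x hx
    obtain ⟨k, hk⟩ := Ordinal.lt_iSup_iff.1 hx
    exact ⟨k, hk.le⟩
  obtain ⟨hlad1, hlad2⟩ := hladder ρ ⟨f, hfltρ, hρcof⟩
  -- cval values over the chain are unbounded
  have hcv : ∀ j : ℕ, ∃ k : ℕ, j < cvalOf (ladder ρ) (f k) := by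
    intro j
    set M : Ordinal.{0} := (Finset.range (j + 1)).sup (fun i => ladder ρ i) with hM
    have hMρ : M < ρ := by
      have hρpos : (0 : Ordinal) < ρ := lt_of_le_of_lt zero_le (hfltρ 0)
      rw [hM]
      refine Finset.sup_lt_iff hρpos |>.2 fun i _ => hlad1 i
    obtain ⟨k, hk⟩ := hρcof M hMρ
    have hMfk : M < f (k + 1) := lt_of_le_of_lt hk (hfmono k)
    refine ⟨k + 1, ?_⟩
    by_contra hle
    push_neg at hle
    have hex : ∃ m, f (k + 1) ≤ ladder ρ m := hlad2 _ (hfltρ (k + 1))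
    have h1 := (cvalOf_spec hex).1
    have h2 : ladder ρ (cvalOf (ladder ρ) (f (k + 1))) ≤ M :=
      Finset.le_sup (Finset.mem_range.2 (Nat.lt_succ_of_le hle))
    exact absurd (le_trans h1 h2) (not_le.2 hMfk)
  -- strictly increasing subsequence of cval values
  set mstep : ℕ → ℕ := fun j => (hcv j).choose with hmstep
  have hmstep_spec : ∀ j, j < cvalOf (ladder ρ) (f (mstep j)) := fun j => (hcv j).choose_spec
  set m : ℕ → ℕ := fun n => Nat.rec (mstep 0) (fun _ p => mstep (cvalOf (ladder ρ) (f p))) n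
    with hm
  have hmsucc : ∀ n, m (n + 1) = mstep (cvalOf (ladder ρ) (f (m n))) := fun n => rfl
  set v : ℕ → ℕ := fun n => cvalOf (ladder ρ) (f (m n)) with hv
  have hvmono : StrictMono v := by
    refine strictMono_nat_of_lt_succ fun n => ?_
    rw [hv]
    dsimp only
    rw [hmsucc]
    exact hmstep_spec _
  set h : ℕ → ℕ := fun k => if hk : ∃ n, v n = k then hk.choose else 0 with hh
  have hhv : ∀ n, h (v n) = n := by
    intro n
    rw [hh]
    dsimp only
    rw [dif_pos ⟨n, rfl⟩]
    exact hvmono.injective (⟨n, rfl⟩ : ∃ j, v j = v n).choose_spec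
  refine ⟨ξ', ρ, hξ'ν, hρκ, h, fun n => ?_⟩
  -- the fibre over `f (m n)` is stationary and lands in colour `n`
  have hfib : IsStationaryIn {β | β ∈ W ∧ f (m n) < β ∧ inj β (f (m n)) = ξ'} κ' := by
    have := hξstat (f (m n)) (hfκ (m n))
    rwa [hfξ (m n)] at this
  refine stationary_mono ?_ hfib
  rintro β ⟨hβW, hβgt, hβval⟩
  refine ⟨hβW, ?_⟩
  have hβκ : β < κ' := hWsub hβW
  rw [GOf_eq (hinj β hβκ).2 hβgt hβval]
  exact hhv n
end ShAux

namespace ShAux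

open Set Ordinal Cardinal

lemma otp_injOn {C : Set Ordinal.{0}} [Small.{0} C] :
    Set.InjOn (fun α => otp (C ∩ Set.Iio α)) C := by
  intro a ha b hb heq
  dsimp only at heq
  by_contra hne
  rcases lt_or_gt_of_ne hne with h | h
  · exact absurd heq (ne_of_lt (otp_inter_lt_inter ha hb h))
  · exact absurd heq.symm (ne_of_lt (otp_inter_lt_inter hb ha h))

end ShAux


open ShAux in
/-- Claim 1.2: existence of the colouring g : S' → ω. -/
theorem stmt_2
    (lam θ₁ θ : Cardinal.{0})
    (hlamreg : lam.IsRegular) (hlamθ₁ : Order.succ θ₁ < lam) (hθ₁θ : θ ≤ θ₁)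
    (hθreg : θ.IsRegular) (hθ : Cardinal.aleph 1 < θ)
    (Sstar S₁ S₂ S' : Set Ordinal) (e : Ordinal → Set Ordinal)
    (hSsub : Sstar ⊆ cofSet θ (Order.succ lam).ord)
    (hSstat : IsStationaryIn Sstar (Order.succ lam).ord)
    (hS₁def : S₁ = {δ | δ < (Order.succ lam).ord ∧ δ.cof = Order.succ θ₁ ∧
      IsStationaryIn (Sstar ∩ Set.Iio δ) δ})
    (hS₁stat : IsStationaryIn S₁ (Order.succ lam).ord)
    (hS₂ : ∀ δ ∈ S₂, δ < (Order.succ lam).ord ∧ Order.IsSuccLimit δ ∧ δ.cof ≤ Order.succ θ₁)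
    (he_closed : ∀ δ ∈ S₂, e δ ⊆ Set.Iio δ ∧ IsClosedIn (e δ) δ ∧
      otp (e δ) ≤ (Order.succ θ₁).ord)
    (he_coh : ∀ δ ∈ S₂, ∀ β ∈ e δ, β ∈ S₂ ∧ e β = e δ ∩ Set.Iio β)
    (he_sup : ∀ δ ∈ S₂, δ.cof ≠ Cardinal.aleph 1 → sSup (e δ) = δ)
    (hS₁S₂stat : IsStationaryIn (S₁ ∩ S₂) (Order.succ lam).ord)
    (hguess : ∀ E, IsClubIn E (Order.succ lam).ord →
      IsStationaryIn {δ | δ ∈ S₁ ∩ S₂ ∧ e δ ⊆ E} (Order.succ lam).ord)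
    (hS'def : S' = Sstar ∩ S₂)
    (hcont : 2 ^ Cardinal.aleph0 ≤ lam) :
    ∃ g : Ordinal → ℕ, ∀ E, IsClubIn E (Order.succ lam).ord →
      IsStationaryIn {δ | δ ∈ S₁ ∩ S₂ ∧ e δ ⊆ E ∧
        ∀ n : ℕ, IsStationaryIn (E ∩ Set.Iio δ ∩ {α | α ∈ S' ∧ g α = n}) δ}
        (Order.succ lam).ord := by
  classical
  set μ : Ordinal.{0} := (Order.succ lam).ord with hμdef
  set κ' : Ordinal.{0} := (Order.succ θ₁).ord with hκ'def
  set ν : Ordinal.{0} := θ₁.ord with hνdef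
  -- basic cardinal arithmetic
  have hθ₁inf : Cardinal.aleph0 ≤ θ₁ :=
    le_trans (Cardinal.aleph0_le_aleph 1) (le_trans hθ.le hθ₁θ)
  have hlaminf : Cardinal.aleph0 ≤ lam := hlamreg.aleph0_le
  have hκreg : (Order.succ θ₁).IsRegular := Cardinal.isRegular_succ hθ₁inf
  have hcofκ' : κ'.cof = Order.succ θ₁ := hκreg.cof_eq
  have hκlim : Order.IsSuccLimit κ' := Cardinal.isSuccLimit_ord (le_trans hθ₁inf (Order.le_succ θ₁))
  have hμlim : Order.IsSuccLimit μ := Cardinal.isSuccLimit_ord (le_trans hlaminf (Order.le_succ lam))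
  have hcofμ : μ.cof = Order.succ lam := (Cardinal.isRegular_succ hlaminf).cof_eq
  have hcofκ'1 : Cardinal.aleph0 < κ'.cof := by
    rw [hcofκ']
    exact lt_of_le_of_lt hθ₁inf (Order.lt_succ θ₁)
  have hcofκ'2 : ν.card < κ'.cof := by
    rw [hcofκ', hνdef, Cardinal.card_ord]
    exact Order.lt_succ θ₁
  have hcofμ1 : Cardinal.aleph0 < μ.cof := by
    rw [hcofμ]
    exact lt_of_le_of_lt hlaminf (Order.lt_succ lam)
  -- the fixed data : Ulam injections and ladders
  have hinj_ex : ∀ β, β < κ' → ∃ f : Ordinal.{0} → Ordinal.{0},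
      (∀ γ, γ < β → f γ < ν) ∧ Set.InjOn f (Set.Iio β) := by
    intro β hβ
    refine exists_inj ?_
    rw [hνdef, Cardinal.card_ord]
    exact Order.lt_succ_iff.1 (Cardinal.lt_ord.1 hβ)
  set inj : Ordinal.{0} → Ordinal.{0} → Ordinal.{0} := fun β =>
    if h : β < κ' then (hinj_ex β h).choose else fun _ => 0 with hinjdef
  have hinj : ∀ β, β < κ' → (∀ γ, γ < β → inj β γ < ν) ∧ Set.InjOn (inj β) (Set.Iio β) := by
    intro β hβ
    rw [hinjdef]
    dsimp only
    rw [dif_pos hβ]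
    exact (hinj_ex β hβ).choose_spec
  set ladder : Ordinal.{0} → ℕ → Ordinal.{0} := fun ρ =>
    if h : ∃ f : ℕ → Ordinal.{0}, (∀ k, f k < ρ) ∧ ∀ x, x < ρ → ∃ k, x ≤ f k
      then h.choose else fun _ => 0 with hladderdef
  have hladder : ∀ ρ, (∃ f : ℕ → Ordinal.{0}, (∀ k, f k < ρ) ∧ ∀ x, x < ρ → ∃ k, x ≤ f k) →
      (∀ k, ladder ρ k < ρ) ∧ ∀ x, x < ρ → ∃ k, x ≤ ladder ρ k := by
    intro ρ hex
    rw [hladderdef]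
    dsimp only
    rw [dif_pos hex]
    exact hex.choose_spec
  -- the candidate colourings
  set gfam : Ordinal.{0} → Ordinal.{0} → (ℕ → ℕ) → Ordinal.{0} → ℕ :=
    fun ξ ρ h α => h (cvalOf (ladder ρ) (GOf inj ξ (otp (e α)))) with hgfam
  by_contra hcon
  push_neg at hcon
  set T : Type := ν.ToType × κ'.ToType × (ℕ → ℕ) with hT
  set gidx : T → Ordinal.{0} → ℕ := fun t =>
    gfam (((Ordinal.ToType.mk (o := ν)).symm t.1 : Set.Iio ν) : Ordinal)
      (((Ordinal.ToType.mk (o := κ')).symm t.2.1 : Set.Iio κ') : Ordinal) t.2.2 with hgidx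
  have hbad : ∀ t : T, ∃ E, IsClubIn E μ ∧ ¬ IsStationaryIn {δ | δ ∈ S₁ ∩ S₂ ∧ e δ ⊆ E ∧
      ∀ n : ℕ, IsStationaryIn (E ∩ Set.Iio δ ∩ {α | α ∈ S' ∧ gidx t α = n}) δ} μ :=
    fun t => hcon (gidx t)
  choose Efun hEclub hEbad using hbad
  have hbad2 : ∀ t : T, ∃ F, IsClubIn F μ ∧ {δ | δ ∈ S₁ ∩ S₂ ∧ e δ ⊆ Efun t ∧
      ∀ n : ℕ, IsStationaryIn (Efun t ∩ Set.Iio δ ∩ {α | α ∈ S' ∧ gidx t α = n}) δ} ∩ F = ∅ := by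
    intro t
    exact not_stationary (hEbad t)
  choose Ffun hFclub hFdisj using hbad2
  -- intersect all the bad clubs
  set Estar : Set Ordinal.{0} := Set.Iio μ ∩ ⋂ t : T, (Efun t ∩ Ffun t) with hEstar
  have hTcard : Cardinal.mk T < μ.cof := by
    rw [hcofμ, hT]
    rw [Cardinal.mk_prod, Cardinal.mk_prod]
    simp only [Cardinal.lift_id, Cardinal.mk_toType, hνdef, hκ'def, Cardinal.card_ord]
    have harrow : Cardinal.mk (ℕ → ℕ) = 2 ^ Cardinal.aleph0 := by
      rw [Cardinal.mk_arrow]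
      simp only [Cardinal.mk_nat, Cardinal.lift_id]
      exact Cardinal.power_self_eq le_rfl
    rw [harrow]
    have hle : θ₁ * (Order.succ θ₁ * 2 ^ Cardinal.aleph0) ≤ lam * (lam * lam) :=
      mul_le_mul' (le_trans (Order.le_succ θ₁) hlamθ₁.le)
        (mul_le_mul' hlamθ₁.le hcont)
    have heq : lam * (lam * lam) = lam := by
      rw [Cardinal.mul_eq_self hlaminf, Cardinal.mul_eq_self hlaminf]
    rw [heq] at hle
    exact Order.lt_succ_iff.2 hle
  have hEstarclub : IsClubIn Estar μ := by
    rw [hEstar]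
    exact isClubIn_iInter hμlim hcofμ1 _
      (fun t => IsClubIn.inter hμlim hcofμ1 (hEclub t) (hFclub t)) hTcard
  -- pick a guessed point
  obtain ⟨δ, hδmem, -⟩ := hguess Estar hEstarclub (Set.Iio μ) isClubIn_Iio
  obtain ⟨hδ12, hδe⟩ := hδmem
  have hδS₁ : δ ∈ S₁ := hδ12.1
  have hδS₂ : δ ∈ S₂ := hδ12.2
  rw [hS₁def] at hδS₁
  obtain ⟨hδμ, hδcof, hδstat⟩ := hδS₁
  obtain ⟨-, hδlim, -⟩ := hS₂ δ hδS₂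
  obtain ⟨heδsub, heδclosed, heδotp⟩ := he_closed δ hδS₂
  have hδcof1 : Cardinal.aleph0 < δ.cof := by
    rw [hδcof]
    exact lt_of_le_of_lt hθ₁inf (Order.lt_succ θ₁)
  have hsupeδ : sSup (e δ) = δ := by
    refine he_sup δ hδS₂ ?_
    rw [hδcof]
    exact ne_of_gt (lt_of_lt_of_le hθ (le_trans hθ₁θ (Order.le_succ θ₁)))
  have heδne : (e δ).Nonempty := by
    rw [Set.nonempty_iff_ne_empty]
    intro hemp
    rw [hemp, csSup_empty] at hsupeδ
    exact absurd hsupeδ.symm (ne_of_gt hδlim.pos)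
  have hclubeδ : IsClubIn (e δ) δ := by
    refine ⟨heδsub, ?_, heδclosed⟩
    intro β hβ
    by_contra hno
    push_neg at hno
    have : sSup (e δ) ≤ β := csSup_le heδne fun x hx => le_of_lt (hno x hx)
    rw [hsupeδ] at this
    exact absurd hβ (not_lt.2 this)
  haveI : Small.{0} (e δ) := club_small hclubeδ
  -- the order type of `e δ` is exactly `κ'`
  have hotpeδ : otp (e δ) = κ' := by
    refine le_antisymm heδotp ?_
    by_contra hno
    push_neg at hno
    have hcard : (otp (e δ)).card ≤ θ₁ := by
      have := Cardinal.lt_ord.1 (hκ'def ▸ hno)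
      exact Order.lt_succ_iff.1 this
    have hcle := cof_le_card_otp hclubeδ hδlim
    rw [hδcof] at hcle
    exact absurd (le_trans hcle hcard) (not_le.2 (Order.lt_succ θ₁))
  -- `Sstar ∩ e δ` is stationary in `δ`
  have hstatstar : IsStationaryIn (Sstar ∩ e δ) δ := by
    intro c hc
    obtain ⟨x, hx1, hx2, hx3⟩ := hδstat _ (IsClubIn.inter hδlim hδcof1 hclubeδ hc)
    exact ⟨x, ⟨hx1.1, hx2⟩, hx3⟩
  -- push it to `κ'`
  set ψ : Ordinal.{0} → Ordinal.{0} := fun α => otp (e δ ∩ Set.Iio α) with hψ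
  set W : Set Ordinal.{0} := ψ '' (Sstar ∩ e δ) with hW
  have hWstat : IsStationaryIn W κ' := by
    have := stat_image hclubeδ (Set.inter_subset_right) hstatstar
    rwa [hotpeδ] at this
  have hWsub : W ⊆ Set.Iio κ' := by
    rintro _ ⟨u, hu, rfl⟩
    rw [← hotpeδ]
    exact otp_lt_of_mem hu.2
  -- apply the key lemma
  obtain ⟨ξ', ρ, hξν, hρκ, hcol, hcolstat⟩ :=
    crux hκlim hcofκ'1 hcofκ'2 inj hinj ladder hladder hWstat hWsub
  -- pull the stationary colour classes back to `δ`
  have hpull : ∀ n : ℕ, IsStationaryIn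
      {α | α ∈ e δ ∧ ψ α ∈ {β | β ∈ W ∧ hcol (cvalOf (ladder ρ) (GOf inj ξ' β)) = n}} δ := by
    intro n
    refine stat_preimage hδlim hδcof1 hclubeδ ?_
    rw [hotpeδ]
    exact hcolstat n
  -- the distinguished index
  set tstar : T := (Ordinal.ToType.mk (o := ν) ⟨ξ', hξν⟩, Ordinal.ToType.mk (o := κ') ⟨ρ, hρκ⟩, hcol) with htstar
  have hgval : gidx tstar = gfam ξ' ρ hcol := by
    rw [hgidx, htstar]
    dsimp only
    rw [OrderIso.symm_apply_apply, OrderIso.symm_apply_apply]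
  have hEsub : Estar ⊆ Efun tstar ∩ Ffun tstar := by
    intro x hx
    exact Set.mem_iInter.1 hx.2 tstar
  -- δ lies in the bad club `Ffun tstar`
  have hδF : δ ∈ Ffun tstar := by
    have hsub : e δ ⊆ Ffun tstar := fun x hx => (hEsub (hδe hx)).2
    have := (hFclub tstar).2.2 (e δ) hsub heδne (by rw [hsupeδ]; exact hδμ)
    rwa [hsupeδ] at this
  have hδE : e δ ⊆ Efun tstar := fun x hx => (hEsub (hδe hx)).1
  -- all colour classes are stationary below δ
  have hallstat : ∀ n : ℕ, IsStationaryIn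
      (Efun tstar ∩ Set.Iio δ ∩ {α | α ∈ S' ∧ gidx tstar α = n}) δ := by
    intro n
    refine stationary_mono ?_ (hpull n)
    rintro α ⟨hαe, hαY⟩
    obtain ⟨hαW, hαcol⟩ := hαY
    have hαS₂ : α ∈ S₂ := (he_coh δ hδS₂ α hαe).1
    have hαeα : e α = e δ ∩ Set.Iio α := (he_coh δ hδS₂ α hαe).2
    have hαstar : α ∈ Sstar := by
      obtain ⟨u, hu, huψ⟩ := hαW
      have : u = α := otp_injOn (C := e δ) hu.2 hαe huψ
      rw [← this]
      exact hu.1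
    refine ⟨⟨hδE hαe, heδsub hαe⟩, ?_, ?_⟩
    · rw [hS'def]
      exact ⟨hαstar, hαS₂⟩
    · rw [hgval, hgfam]
      dsimp only
      rw [hαeα]
      exact hαcol
  -- contradiction with the choice of `Ffun tstar`
  exact Set.eq_empty_iff_forall_notMem.1 (hFdisj tstar) δ
    ⟨⟨hδ12, hδE, hallstat⟩, hδF⟩
end
end

section
/- Under the standing setup: there exist β* < θ₁⁺ and i* < θ such that, letting h = h_{i*}^{β*}, for every club E of λ⁺ there are stationarily many δ ∈ S₁ ∩ S₂ such that e_δ ⊆ E and the set {ζ ≤ β* : E ∩ δ ∩ h⁻¹({ζ}) ∩ S' is stationary in δ} has cardinality at least θ₁. -/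
noncomputable section

open Set Cardinal Ordinal

def srel (C : Set Ordinal.{0}) [Small.{0} C] : Shrink C → Shrink C → Prop :=
  fun x y => ((equivShrink C).symm x : Ordinal) < ((equivShrink C).symm y : Ordinal)

def srelEmb (C : Set Ordinal.{0}) [Small.{0} C] :
    srel C ↪r ((· < ·) : Ordinal → Ordinal → Prop) :=
  ⟨⟨fun x => ((equivShrink C).symm x : Ordinal),
      fun a b hab => (equivShrink C).symm.injective (Subtype.coe_injective hab)⟩, Iff.rfl⟩

instance srel_wo (C : Set Ordinal.{0}) [Small.{0} C] : IsWellOrder (Shrink C) (srel C) :=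
  RelEmbedding.isWellOrder (srelEmb C)

lemma otp_eq_type (C : Set Ordinal.{0}) [h : Small.{0} C] : otp C = Ordinal.type (srel C) := by
  unfold otp
  rw [dif_pos h]
  rfl

lemma otp_le_otp {A B : Set Ordinal.{0}} (hAB : A ⊆ B) [Small.{0} B] : otp A ≤ otp B := by
  haveI : Small.{0} A := small_subset hAB
  rw [otp_eq_type A, otp_eq_type B]
  refine RelEmbedding.ordinal_type_le
    (⟨⟨fun x => equivShrink B ⟨((equivShrink A).symm x : Ordinal),
        hAB ((equivShrink A).symm x).2⟩, ?_⟩, ?_⟩ : srel A ↪r srel B)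
  · intro a b hab
    exact (equivShrink A).symm.injective
      (Subtype.ext (congrArg (fun z : ↥B => (z : Ordinal)) ((equivShrink B).injective hab)))
  · intro a b
    show ((equivShrink B).symm (equivShrink B _) : Ordinal) <
      ((equivShrink B).symm (equivShrink B _) : Ordinal) ↔ _
    simp [srel]

lemma otp_inter_Iio_lt {B : Set Ordinal.{0}} [Small.{0} B] {x : Ordinal} (hx : x ∈ B) :
    otp (B ∩ Set.Iio x) < otp B := by
  haveI : Small.{0} ↥(B ∩ Set.Iio x) := small_subset Set.inter_subset_left
  rw [otp_eq_type _, otp_eq_type B]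
  set A := B ∩ Set.Iio x with hA
  refine PrincipalSeg.ordinal_type_lt
    (⟨⟨⟨fun a => equivShrink B ⟨((equivShrink A).symm a : Ordinal),
        (((equivShrink A).symm a).2 : _ ∈ A).1⟩, ?_⟩, ?_⟩, equivShrink B ⟨x, hx⟩, ?_⟩ :
      PrincipalSeg (srel A) (srel B))
  · intro a b hab
    exact (equivShrink A).symm.injective
      (Subtype.ext (congrArg (fun z : ↥B => (z : Ordinal)) ((equivShrink B).injective hab)))
  · intro a b
    show ((equivShrink B).symm (equivShrink B _) : Ordinal) <
      ((equivShrink B).symm (equivShrink B _) : Ordinal) ↔ _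
    simp [srel]
  · intro b
    constructor
    · rintro ⟨a, rfl⟩
      show ((equivShrink B).symm (equivShrink B _) : Ordinal) < _
      simpa [srel] using (((equivShrink A).symm a).2 : _ ∈ A).2
    · intro hb
      simp only [srel, Equiv.symm_apply_apply] at hb
      refine ⟨equivShrink A ⟨((equivShrink B).symm b : Ordinal), ((equivShrink B).symm b).2, hb⟩, ?_⟩
      simp only [RelEmbedding.coe_mk, Function.Embedding.coeFn_mk, Equiv.symm_apply_apply]
      show equivShrink B _ = b
      apply (equivShrink B).symm.injective
      simp

lemma mk_eq_lift_otp (C : Set Ordinal.{0}) [Small.{0} C] :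
    Cardinal.mk C = Cardinal.lift.{1} (otp C).card := by
  rw [otp_eq_type C, Ordinal.card_type, Cardinal.lift_mk_shrink' C]
  exact (Cardinal.lift_uzero _).symm

lemma mk_shrink_lt {ι : Type 1} [Small.{0} ι] {c : Cardinal.{0}}
    (h : #ι < Cardinal.lift.{1} c) : #(Shrink.{0} ι) < c := by
  rwa [← Cardinal.lift_lt.{0,1}, Cardinal.lift_mk_shrink' ι, Cardinal.lift_uzero]

lemma csSup_lt_of_mk_lt {s : Set Ordinal.{0}} {δ : Ordinal}
    (hsub : s ⊆ Set.Iio δ) (hδ : 0 < δ)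
    (hcard : #s < Cardinal.lift.{1} δ.cof) : sSup s < δ := by
  rcases s.eq_empty_or_nonempty with rfl | hne
  · rwa [csSup_empty, Ordinal.bot_eq_zero]
  · haveI : Small.{0} s := small_subset hsub
    have hr : Set.range (fun x : Shrink.{0} s => (((equivShrink s).symm x : ↥s) : Ordinal)) = s := by
      ext b
      constructor
      · rintro ⟨x, rfl⟩; exact ((equivShrink s).symm x).2
      · intro hb
        exact ⟨equivShrink s ⟨b, hb⟩, by simp⟩
    rw [← hr]
    have : sSup (Set.range fun x : Shrink.{0} s => (((equivShrink s).symm x : ↥s) : Ordinal))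
        = ⨆ x : Shrink.{0} s, (((equivShrink s).symm x : ↥s) : Ordinal) := rfl
    rw [this]
    refine Ordinal.iSup_lt_ord (mk_shrink_lt hcard) ?_
    intro x
    exact hsub ((equivShrink s).symm x).2

lemma exists_omega_limit {δ : Ordinal.{0}} (hcof : ℵ₀ < δ.cof) (F : Ordinal.{0} → Ordinal.{0})
    (hF : ∀ β < δ, β < F β ∧ F β < δ) {β₀ : Ordinal} (hβ₀ : β₀ < δ) :
    ∃ g : ℕ → Ordinal, g 0 = β₀ ∧ (∀ n, g (n + 1) = F (g n)) ∧ (∀ n, g n < δ) ∧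
      (∀ m n, m ≤ n → g m ≤ g n) ∧ (⨆ n, g n) < δ ∧ (∀ n, g n < ⨆ n, g n) := by
  refine ⟨fun n => F^[n] β₀, rfl, fun n => Function.iterate_succ_apply' F n β₀, ?_⟩
  have hlt : ∀ n, F^[n] β₀ < δ := by
    intro n
    induction n with
    | zero => exact hβ₀
    | succ n ih => rw [Function.iterate_succ_apply' F n β₀]; exact (hF _ ih).2
  have hmono : ∀ n, F^[n] β₀ < F^[n+1] β₀ := by
    intro n
    rw [Function.iterate_succ_apply' F n β₀]
    exact (hF _ (hlt n)).1
  have hsup : (⨆ n, F^[n] β₀) < δ :=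
    Ordinal.iSup_lt_ord (a := δ) (by rw [Cardinal.mk_nat]; exact hcof) hlt
  refine ⟨hlt, ?_, hsup, ?_⟩
  · intro m n hmn
    exact (monotone_nat_of_le_succ (fun k => (hmono k).le)) hmn
  · intro n
    exact lt_of_lt_of_le (hmono n) (Ordinal.le_iSup (fun n => F^[n] β₀) (n+1))

lemma isLimit_of_cof {δ : Ordinal.{0}} (hcof : ℵ₀ < Ordinal.cof δ) : Order.IsSuccLimit δ :=
  Ordinal.aleph0_le_cof.mp hcof.le

lemma isClubIn_iInter {δ : Ordinal.{0}} (hcof : ℵ₀ < δ.cof) {ι : Type 1} [Small.{0} ι]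
    [Nonempty ι] {D : ι → Set Ordinal} (hcard : #ι < Cardinal.lift.{1} δ.cof)
    (hD : ∀ i, IsClubIn (D i) δ) : IsClubIn (⋂ i, D i) δ := by
  have hδlim : Order.IsSuccLimit δ := isLimit_of_cof hcof
  refine ⟨(Set.iInter_subset _ (Classical.arbitrary ι)).trans (hD _).1, ?_, ?_⟩
  · intro β hβ
    have hnext : ∀ i : ι, ∀ β : Ordinal, ∃ y, β < δ → (y ∈ D i ∧ β ≤ y ∧ y < δ) := by
      intro i β
      by_cases h : β < δ
      · obtain ⟨y, hy1, hy2⟩ := (hD i).2.1 β h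
        exact ⟨y, fun _ => ⟨hy1, hy2, (hD i).1 hy1⟩⟩
      · exact ⟨0, fun h' => absurd h' h⟩
    choose next hnext using hnext
    set F : Ordinal → Ordinal := fun β =>
      max (Order.succ β) (⨆ x : Shrink.{0} ι, next ((equivShrink ι).symm x) β) with hFdef
    have hF : ∀ β' < δ, β' < F β' ∧ F β' < δ := by
      intro β' hβ'
      constructor
      · exact lt_of_lt_of_le (Order.lt_succ β') (le_max_left _ _)
      · refine max_lt (hδlim.succ_lt hβ') ?_
        refine Ordinal.iSup_lt_ord (a := δ) (mk_shrink_lt hcard) ?_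
        intro x
        exact (hnext _ _ hβ').2.2
    obtain ⟨g, hg0, hgsucc, hglt, hgmono, hsup, hlt⟩ := exists_omega_limit hcof F hF hβ
    refine ⟨⨆ n, g n, ?_, ?_⟩
    · apply Set.mem_iInter.mpr
      intro i
      have hmem : ∀ n, next i (g n) ∈ D i ∧ g n ≤ next i (g n) ∧ next i (g n) < δ :=
        fun n => hnext i (g n) (hglt n)
      have hle : ∀ n, next i (g n) ≤ g (n+1) := by
        intro n
        rw [hgsucc n]
        refine le_trans ?_ (le_max_right _ _)
        have := Ordinal.le_iSup (fun x : Shrink.{0} ι => next ((equivShrink ι).symm x) (g n))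
          (equivShrink ι i)
        simpa using this
      have hsub : Set.range (fun n => next i (g n)) ⊆ D i := by
        rintro _ ⟨n, rfl⟩; exact (hmem n).1
      have hSup2 : sSup (Set.range fun n => next i (g n)) = ⨆ n, g n := by
        apply le_antisymm
        · apply csSup_le (Set.range_nonempty _)
          rintro _ ⟨n, rfl⟩
          exact (hle n).trans (Ordinal.le_iSup g (n+1))
        · refine Ordinal.iSup_le ?_
          intro n
          exact le_trans (hmem n).2.1 (le_csSup (Ordinal.bddAbove_range _) (Set.mem_range_self n))
      have := (hD i).2.2 _ hsub ⟨_, Set.mem_range_self 0⟩ (by rw [hSup2]; exact hsup)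
      rwa [hSup2] at this
    · exact le_of_lt (hg0 ▸ hlt 0)
  · intro s hs hne hlt
    apply Set.mem_iInter.mpr
    intro i
    exact (hD i).2.2 s (hs.trans (Set.iInter_subset _ i)) hne hlt

lemma isClubIn_Iio {δ : Ordinal.{0}} : IsClubIn (Set.Iio δ) δ :=
  ⟨subset_rfl, fun β hβ => ⟨β, hβ, le_rfl⟩, fun _ _ _ hlt => hlt⟩

lemma isClubIn_Ioo {δ b : Ordinal.{0}} (hlim : Order.IsSuccLimit δ) (hb : b < δ) :
    IsClubIn {γ | b < γ ∧ γ < δ} δ := by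
  refine ⟨fun γ hγ => hγ.2, ?_, ?_⟩
  · intro β hβ
    refine ⟨max (Order.succ b) β, ⟨?_, ?_⟩, le_max_right _ _⟩
    · exact lt_of_lt_of_le (Order.lt_succ b) (le_max_left _ _)
    · exact max_lt (hlim.succ_lt hb) hβ
  · rintro s hs ⟨x, hx⟩ hlt
    have hbdd : BddAbove s := ⟨δ, fun y hy => ((hs hy).2).le⟩
    exact ⟨lt_of_lt_of_le (hs hx).1 (le_csSup hbdd hx), hlt⟩

lemma IsStationaryIn.mono {S S' : Set Ordinal.{0}} {δ : Ordinal.{0}}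
    (h : IsStationaryIn S δ) (hss : S ⊆ S') : IsStationaryIn S' δ :=
  fun C hC => ((h C hC).mono (Set.inter_subset_inter_left C hss))

lemma isClubIn_inter {δ : Ordinal.{0}} (hcof : ℵ₀ < δ.cof) {C C' : Set Ordinal.{0}}
    (hC : IsClubIn C δ) (hC' : IsClubIn C' δ) : IsClubIn (C ∩ C') δ := by
  have h2 : C ∩ C' = ⋂ b : ULift.{1} Bool, (if b.down then C else C') := by
    ext x
    simp only [Set.mem_inter_iff, Set.mem_iInter]
    constructor
    · rintro ⟨h1, h2⟩ b
      rcases b with ⟨b⟩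
      cases b <;> simp [h1, h2]
    · intro h
      exact ⟨by simpa using h ⟨true⟩, by simpa using h ⟨false⟩⟩
  rw [h2]
  refine isClubIn_iInter hcof ?_ ?_
  · calc #(ULift.{1} Bool) < ℵ₀ := Cardinal.lt_aleph0_of_finite _
    _ = Cardinal.lift.{1} ℵ₀ := by simp
    _ ≤ Cardinal.lift.{1} δ.cof := Cardinal.lift_le.mpr hcof.le
  · rintro ⟨b⟩
    cases b <;> simpa
 
lemma IsStationaryIn.inter_club {S C : Set Ordinal.{0}} {δ : Ordinal.{0}} (hcof : ℵ₀ < δ.cof)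
    (hS : IsStationaryIn S δ) (hC : IsClubIn C δ) : IsStationaryIn (S ∩ C) δ := by
  intro C' hC'
  have := hS (C ∩ C') (isClubIn_inter hcof hC hC')
  rwa [← Set.inter_assoc] at this

lemma isClubIn_diagonal {δ : Ordinal.{0}} (hcof : ℵ₀ < δ.cof) {e : Set Ordinal.{0}}
    (he : e ⊆ Set.Iio δ)
    (hsmall : ∀ β < δ, #↥(e ∩ Set.Iio β) < Cardinal.lift.{1} δ.cof)
    {D : Ordinal → Set Ordinal} (hD : ∀ x ∈ e, IsClubIn (D x) δ) :
    IsClubIn {β | β < δ ∧ ∀ x ∈ e, x < β → β ∈ D x} δ := by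
  have hδlim : Order.IsSuccLimit δ := isLimit_of_cof hcof
  refine ⟨fun β hβ => hβ.1, ?_, ?_⟩
  · intro β₀ hβ₀
    have hnext : ∀ x : Ordinal, ∀ β : Ordinal, ∃ y, x ∈ e → β < δ → (y ∈ D x ∧ β ≤ y ∧ y < δ) := by
      intro x β
      by_cases h : x ∈ e ∧ β < δ
      · obtain ⟨y, hy1, hy2⟩ := (hD x h.1).2.1 β h.2
        exact ⟨y, fun _ _ => ⟨hy1, hy2, (hD x h.1).1 hy1⟩⟩
      · exact ⟨0, fun h1 h2 => absurd ⟨h1, h2⟩ h⟩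
    choose next hnext using hnext
    haveI : ∀ β : Ordinal, Small.{0} ↥(e ∩ Set.Iio β) :=
      fun β => small_subset (Set.inter_subset_left.trans he)
    set F : Ordinal → Ordinal := fun β =>
      if hβ : β < δ then
        max (Order.succ β)
          (⨆ x : Shrink.{0} ↥(e ∩ Set.Iio β),
             next (((equivShrink ↥(e ∩ Set.Iio β)).symm x : ↥(e ∩ Set.Iio β)) : Ordinal) β)
      else 0 with hFdef
    have hF : ∀ β < δ, β < F β ∧ F β < δ := by
      intro β hβ
      simp only [hFdef, dif_pos hβ]
      constructor
      · exact lt_of_lt_of_le (Order.lt_succ β) (le_max_left _ _)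
      · refine max_lt (hδlim.succ_lt hβ) ?_
        refine Ordinal.iSup_lt_ord (a := δ) (mk_shrink_lt (hsmall β hβ)) ?_
        intro x
        exact (hnext _ β ((equivShrink ↥(e ∩ Set.Iio β)).symm x).2.1 hβ).2.2
    obtain ⟨g, hg0, hgsucc, hglt, hgmono, hsup, hlt⟩ := exists_omega_limit hcof F hF hβ₀
    refine ⟨⨆ n, g n, ⟨hsup, ?_⟩, (hg0 ▸ (hlt 0)).le⟩
    intro x hx hxγ
    obtain ⟨n₀, hn₀⟩ := Ordinal.lt_iSup_iff.mp hxγ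
    have hxg : ∀ n, x < g (n₀ + n) :=
      fun n => lt_of_lt_of_le hn₀ (hgmono n₀ (n₀+n) (Nat.le_add_right _ _))
    have hmem : ∀ n, next x (g (n₀+n)) ∈ D x ∧ g (n₀+n) ≤ next x (g (n₀+n)) ∧
        next x (g (n₀+n)) < δ := fun n => hnext x (g (n₀+n)) hx (hglt _)
    have hle : ∀ n, next x (g (n₀+n)) ≤ g (n₀+n+1) := by
      intro n
      rw [hgsucc (n₀+n)]
      simp only [hFdef, dif_pos (hglt (n₀+n))]
      refine le_trans ?_ (le_max_right _ _)
      have := Ordinal.le_iSup (fun y : Shrink.{0} ↥(e ∩ Set.Iio (g (n₀+n))) =>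
        next (((equivShrink ↥(e ∩ Set.Iio (g (n₀+n)))).symm y : ↥(e ∩ Set.Iio (g (n₀+n)))) : Ordinal)
          (g (n₀+n)))
        (equivShrink ↥(e ∩ Set.Iio (g (n₀+n))) ⟨x, hx, hxg n⟩)
      simpa using this
    have hsub : Set.range (fun n => next x (g (n₀+n))) ⊆ D x := by
      rintro _ ⟨n, rfl⟩; exact (hmem n).1
    have hSup2 : sSup (Set.range fun n => next x (g (n₀+n))) = ⨆ n, g n := by
      apply le_antisymm
      · apply csSup_le (Set.range_nonempty _)
        rintro _ ⟨n, rfl⟩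
        exact (hle n).trans (Ordinal.le_iSup g (n₀+n+1))
      · refine Ordinal.iSup_le ?_
        intro n
        calc g n ≤ g (n₀+n) := hgmono _ _ (Nat.le_add_left _ _)
        _ ≤ next x (g (n₀+n)) := (hmem n).2.1
        _ ≤ sSup (Set.range fun n => next x (g (n₀+n))) :=
            le_csSup (Ordinal.bddAbove_range _) (Set.mem_range_self n)
    have := (hD x hx).2.2 _ hsub ⟨_, Set.mem_range_self 0⟩ (by rw [hSup2]; exact hsup)
    rwa [hSup2] at this
  · intro s hs hne hσ
    have hbdd : BddAbove s := ⟨δ, fun y hy => ((hs hy).1).le⟩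
    refine ⟨hσ, ?_⟩
    intro x hx hxσ
    by_cases hmem : sSup s ∈ s
    · exact (hs hmem).2 x hx hxσ
    · have hs' : (s ∩ Set.Ioi x).Nonempty := by
        by_contra hemp
        rw [Set.not_nonempty_iff_eq_empty] at hemp
        have hle : sSup s ≤ x := csSup_le hne (fun b hb => by
          by_contra hbx
          push_neg at hbx
          have hbmem : b ∈ s ∩ Set.Ioi x := ⟨hb, hbx⟩
          rw [hemp] at hbmem
          exact hbmem)
        exact absurd hxσ (not_lt.mpr hle)
      have hSup3 : sSup (s ∩ Set.Ioi x) = sSup s := by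
        apply le_antisymm
        · exact csSup_le hs' (fun b hb => le_csSup hbdd hb.1)
        · apply csSup_le hne
          intro b hb
          obtain ⟨c, hc⟩ := hs'
          rcases le_or_gt b x with h | h
          · exact le_trans (h.trans hc.2.le) (le_csSup (hbdd.mono Set.inter_subset_left) hc)
          · exact le_csSup (hbdd.mono Set.inter_subset_left) ⟨hb, h⟩
      have hsub : s ∩ Set.Ioi x ⊆ D x := fun b hb => (hs hb.1).2 x hx hb.2
      have := (hD x hx).2.2 _ hsub hs' (by rw [hSup3]; exact hσ)
      rwa [hSup3] at this

lemma unbounded_of_sSup {e : Set Ordinal.{0}} {δ : Ordinal.{0}} (hsup : sSup e = δ) :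
    ∀ β < δ, ∃ x ∈ e, β < x := by
  intro β hβ
  by_contra h
  push_neg at h
  rcases e.eq_empty_or_nonempty with rfl | hne
  · rw [csSup_empty, Ordinal.bot_eq_zero] at hsup
    exact absurd hβ (by rw [← hsup]; exact not_lt_zero)
  · have : sSup e ≤ β := csSup_le hne h
    rw [hsup] at this
    exact absurd hβ (not_lt.mpr this)

lemma isClubIn_accSet {δ : Ordinal.{0}} (hcof : ℵ₀ < δ.cof) {e : Set Ordinal.{0}}
    (hsub : e ⊆ Set.Iio δ) (hcl : IsClosedIn e δ) (hsup : sSup e = δ) :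
    IsClubIn (accSet e) δ := by
  have hub := unbounded_of_sSup hsup
  refine ⟨fun β hβ => hsub hβ.1, ?_, ?_⟩
  · intro β₀ hβ₀
    have hnext : ∀ β : Ordinal, ∃ x, β < δ → (x ∈ e ∧ β < x) := by
      intro β
      by_cases h : β < δ
      · obtain ⟨x, hx1, hx2⟩ := hub β h
        exact ⟨x, fun _ => ⟨hx1, hx2⟩⟩
      · exact ⟨0, fun h' => absurd h' h⟩
    choose next hnext using hnext
    have hF : ∀ β < δ, β < next β ∧ next β < δ := by
      intro β hβ
      exact ⟨(hnext β hβ).2, hsub (hnext β hβ).1⟩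
    obtain ⟨g, hg0, hgsucc, hglt, hgmono, hsupg, hltg⟩ := exists_omega_limit hcof next hF hβ₀
    set γ := ⨆ n, g n with hγ
    have hge : ∀ n, g (n+1) ∈ e := by
      intro n
      rw [hgsucc]
      exact (hnext (g n) (hglt n)).1
    have h1 : sSup (Set.range fun n => g (n+1)) = γ := by
      apply le_antisymm
      · apply csSup_le (Set.range_nonempty _)
        rintro _ ⟨n, rfl⟩
        exact Ordinal.le_iSup g (n+1)
      · refine Ordinal.iSup_le fun n => ?_
        exact le_trans (hgmono n (n+1) (by omega)) (le_csSup (Ordinal.bddAbove_range _) ⟨n, rfl⟩)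
    have hγe : γ ∈ e := by
      have := hcl (Set.range fun n => g (n+1))
        (by rintro b ⟨n, hn⟩; rw [← hn]; exact hge n) ⟨g 1, ⟨0, rfl⟩⟩ (by rw [h1]; exact hsupg)
      rwa [h1] at this
    refine ⟨γ, ⟨hγe, ?_⟩, (hg0 ▸ hltg 0).le⟩
    apply le_antisymm
    · refine le_trans (le_of_eq h1.symm) ?_
      apply csSup_le (Set.range_nonempty _)
      rintro _ ⟨n, rfl⟩
      exact le_csSup ⟨γ, fun y hy => hy.2.le⟩ ⟨hge n, hltg (n+1)⟩
    · exact csSup_le ⟨g 1, hge 0, hltg 1⟩ fun b hb => hb.2.le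
  · intro s hs hne hσ
    have hse : s ⊆ e := fun b hb => (hs hb).1
    have hσe : sSup s ∈ e := hcl s hse hne hσ
    refine ⟨hσe, ?_⟩
    by_cases hmem : sSup s ∈ s
    · exact (hs hmem).2
    · have hsub2 : s ⊆ e ∩ Set.Iio (sSup s) := fun b hb =>
        ⟨hse hb, lt_of_le_of_ne (le_csSup ⟨δ, fun y hy => (hsub (hse hy)).le⟩ hb)
          (fun h => hmem (h ▸ hb))⟩
      apply le_antisymm
      · exact csSup_le hne (fun b hb => le_csSup ⟨sSup s, fun y hy => hy.2.le⟩ (hsub2 hb))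
      · exact csSup_le (hne.mono hsub2) (fun b hb => hb.2.le)

lemma mem_closed_of_acc {E e : Set Ordinal.{0}} {Λ α : Ordinal.{0}}
    (hcl : IsClosedIn E Λ) (hsub : e ⊆ E) (hacc : α ∈ accSet e) (hα : α < Λ) (h0 : α ≠ 0) :
    α ∈ E := by
  have h1 : e ∩ Set.Iio α ⊆ E := fun b hb => hsub hb.1
  have hne : (e ∩ Set.Iio α).Nonempty := by
    by_contra h
    rw [Set.not_nonempty_iff_eq_empty] at h
    have h2 := hacc.2
    rw [h, csSup_empty, Ordinal.bot_eq_zero] at h2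
    exact h0 h2
  have := hcl _ h1 hne (by rw [← hacc.2]; exact hα)
  rwa [← hacc.2] at this


lemma otp_inter_lt_inter {e : Set Ordinal.{0}} [Small.{0} ↥e] {x y : Ordinal}
    (hx : x ∈ e) (hxy : x < y) : otp (e ∩ Set.Iio x) < otp (e ∩ Set.Iio y) := by
  haveI : Small.{0} ↥(e ∩ Set.Iio y) := small_subset Set.inter_subset_left
  have h := otp_inter_Iio_lt (B := e ∩ Set.Iio y) ⟨hx, hxy⟩
  have heq : (e ∩ Set.Iio y) ∩ Set.Iio x = e ∩ Set.Iio x := by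
    ext b
    constructor
    · rintro ⟨⟨h1, _⟩, h3⟩; exact ⟨h1, h3⟩
    · rintro ⟨h1, h3⟩; exact ⟨⟨h1, h3.trans hxy⟩, h3⟩
  rwa [heq] at h

/-- Subclaim 1.3. -/
theorem stmt_3
    (lam θ₁ θ : Cardinal.{0})
    (hlamreg : lam.IsRegular) (hlamθ₁ : Order.succ θ₁ < lam) (hθ₁θ : θ ≤ θ₁)
    (hθreg : θ.IsRegular) (hθ : Cardinal.aleph 1 < θ)
    (Sstar S₁ S₂ S' : Set Ordinal) (e : Ordinal → Set Ordinal)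
    (hSsub : Sstar ⊆ cofSet θ (Order.succ lam).ord)
    (hSstat : IsStationaryIn Sstar (Order.succ lam).ord)
    (hS₁def : S₁ = {δ | δ < (Order.succ lam).ord ∧ δ.cof = Order.succ θ₁ ∧
      IsStationaryIn (Sstar ∩ Set.Iio δ) δ})
    (hS₁stat : IsStationaryIn S₁ (Order.succ lam).ord)
    (hS₂ : ∀ δ ∈ S₂, δ < (Order.succ lam).ord ∧ Order.IsSuccLimit δ ∧ δ.cof ≤ Order.succ θ₁)
    (he_closed : ∀ δ ∈ S₂, e δ ⊆ Set.Iio δ ∧ IsClosedIn (e δ) δ ∧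
      otp (e δ) ≤ (Order.succ θ₁).ord)
    (he_coh : ∀ δ ∈ S₂, ∀ β ∈ e δ, β ∈ S₂ ∧ e β = e δ ∩ Set.Iio β)
    (he_sup : ∀ δ ∈ S₂, δ.cof ≠ Cardinal.aleph 1 → sSup (e δ) = δ)
    (hS₁S₂stat : IsStationaryIn (S₁ ∩ S₂) (Order.succ lam).ord)
    (hguess : ∀ E, IsClubIn E (Order.succ lam).ord →
      IsStationaryIn {δ | δ ∈ S₁ ∩ S₂ ∧ e δ ⊆ E} (Order.succ lam).ord)
    (hS'def : S' = Sstar ∩ S₂)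
    (ξ : Ordinal → Ordinal → Ordinal)
    (hξmono : ∀ δ ∈ S', ∀ i j : Ordinal, i < j → j < θ.ord → ξ δ i < ξ δ j)
    (hξsup : ∀ δ ∈ S', sSup (ξ δ '' Set.Iio θ.ord) = δ)
    (hξmem : ∀ δ ∈ S', ∀ i < θ.ord, ξ δ i ∈ e δ)
    (hξdep : ∀ δ ∈ S', ∀ δ' ∈ S', ∀ i < θ.ord,
      otp (e δ) = otp (e δ') → otp (e (ξ δ i)) = otp (e (ξ δ' i))) :
    ∃ βs < (Order.succ θ₁).ord, ∃ is < θ.ord,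
      ∀ E, IsClubIn E (Order.succ lam).ord →
        IsStationaryIn {δ | δ ∈ S₁ ∩ S₂ ∧ e δ ⊆ E ∧
          Cardinal.lift.{1} θ₁ ≤ Cardinal.mk
            {ζ : Ordinal | ζ ≤ βs ∧
              IsStationaryIn
                (E ∩ Set.Iio δ ∩ {α | α ∈ S' ∧ min (otp (e (ξ α is))) βs = ζ}) δ}}
          (Order.succ lam).ord := by

  classical
  set Λ := (Order.succ lam).ord with hΛdef
  set μ := Order.succ θ₁ with hμdef
  have hθaleph0 : ℵ₀ < θ := lt_trans Cardinal.aleph0_lt_aleph_one hθ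
  have hθ₁inf : ℵ₀ ≤ θ₁ := hθaleph0.le.trans hθ₁θ
  have hμreg : μ.IsRegular := Cardinal.isRegular_succ hθ₁inf
  have hlaminf : ℵ₀ ≤ lam := hlamreg.aleph0_le
  have hslamreg : (Order.succ lam).IsRegular := Cardinal.isRegular_succ hlaminf
  have hcofΛ : Λ.cof = Order.succ lam := hslamreg.cof_eq
  have hcofμord : μ.ord.cof = μ := hμreg.cof_eq
  have hℵ₀Λ : ℵ₀ < Λ.cof := by
    rw [hcofΛ]; exact lt_of_le_of_lt hlaminf (Order.lt_succ lam)
  have hθ₁μ : θ₁ < μ := Order.lt_succ θ₁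
  have hθμ : θ ≤ μ := hθ₁θ.trans hθ₁μ.le
  have hμinf : ℵ₀ ≤ μ := hθ₁inf.trans hθ₁μ.le
  have hμlt : μ < Order.succ lam := hlamθ₁.trans (Order.lt_succ lam)
  have hθne0 : θ ≠ 0 := fun h => by rw [h] at hθaleph0; exact (Cardinal.zero_le ℵ₀).not_gt hθaleph0
  have hθordpos : 0 < θ.ord := by
    refine lt_of_lt_of_le Ordinal.omega0_pos ?_
    rw [← Cardinal.ord_aleph0]
    exact Cardinal.ord_le_ord.mpr hθaleph0.le
  have hμordpos : 0 < μ.ord := by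
    refine lt_of_lt_of_le Ordinal.omega0_pos ?_
    rw [← Cardinal.ord_aleph0]
    exact Cardinal.ord_le_ord.mpr hμinf
  by_contra hcon
  push_neg at hcon
  have hcon2 : ∀ βs, βs < μ.ord → ∀ is, is < θ.ord →
      ∃ E F, IsClubIn E Λ ∧ IsClubIn F Λ ∧
        ({δ | δ ∈ S₁ ∩ S₂ ∧ e δ ⊆ E ∧
          Cardinal.lift.{1} θ₁ ≤ Cardinal.mk
            {ζ : Ordinal | ζ ≤ βs ∧
              IsStationaryIn
                (E ∩ Set.Iio δ ∩ {α | α ∈ S' ∧ min (otp (e (ξ α is))) βs = ζ}) δ}} ∩ F) = ∅ := by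
    intro βs hβs is his
    obtain ⟨E, hE, hns⟩ := hcon βs hβs is his
    rw [IsStationaryIn] at hns
    push_neg at hns
    obtain ⟨F, hF, hempty⟩ := hns
    exact ⟨E, F, hE, hF, hempty⟩
  choose Efn Ffn hEclub hFclub hdisj using hcon2
  set ι := (↥(Set.Iio μ.ord) × ↥(Set.Iio θ.ord) : Type 1) with hιdef
  haveI : Small.{0} ι := by infer_instance
  haveI : Nonempty ι := ⟨⟨⟨0, hμordpos⟩, ⟨0, hθordpos⟩⟩⟩
  set G : ι → Set Ordinal := fun p => Efn p.1.1 p.1.2 p.2.1 p.2.2 ∩ Ffn p.1.1 p.1.2 p.2.1 p.2.2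
    with hGdef
  have hGclub : ∀ p, IsClubIn (G p) Λ :=
    fun p => isClubIn_inter hℵ₀Λ (hEclub _ _ _ _) (hFclub _ _ _ _)
  have hcardι : #ι < Cardinal.lift.{1} Λ.cof := by
    rw [hcofΛ, hιdef]
    have h1 : #(↥(Set.Iio μ.ord) × ↥(Set.Iio θ.ord) : Type 1)
        = #(↥(Set.Iio μ.ord)) * #(↥(Set.Iio θ.ord)) := by
      rw [Cardinal.mk_prod, Cardinal.lift_id, Cardinal.lift_id]
    rw [h1, Ordinal.mk_Iio_ordinal, Ordinal.mk_Iio_ordinal, Cardinal.card_ord,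
      Cardinal.card_ord, ← Cardinal.lift_mul]
    refine Cardinal.lift_lt.mpr ?_
    rw [Cardinal.mul_eq_left hμinf hθμ hθne0]
    exact hμlt
  set Estar := ⋂ p : ι, G p with hEstardef
  have hEstarclub : IsClubIn Estar Λ := isClubIn_iInter hℵ₀Λ hcardι hGclub
  obtain ⟨δ, hδset, hδEstar⟩ := hguess Estar hEstarclub Estar hEstarclub
  obtain ⟨hδ12, hee⟩ := hδset
  have hδS₁ : δ ∈ S₁ := hδ12.1
  have hδS₂ : δ ∈ S₂ := hδ12.2
  rw [hS₁def] at hδS₁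
  obtain ⟨hδΛ, hδcof, hδSstat⟩ := hδS₁
  have hℵ₀δ : ℵ₀ < δ.cof := by
    rw [hδcof]; exact lt_of_le_of_lt hθ₁inf hθ₁μ
  have hδlim : Order.IsSuccLimit δ := isLimit_of_cof hℵ₀δ
  obtain ⟨hesub, hecl, heotp⟩ := he_closed δ hδS₂
  have hesup : sSup (e δ) = δ := by
    refine he_sup δ hδS₂ ?_
    rw [hδcof]
    exact (lt_trans (lt_of_lt_of_le hθ hθ₁θ) hθ₁μ).ne'
  haveI : Small.{0} ↥(e δ) := small_subset hesub
  have hcard_e : ∀ β < δ, #↥(e δ ∩ Set.Iio β) < Cardinal.lift.{1} μ := by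
    intro β hβ
    obtain ⟨x, hxe, hxβ⟩ := unbounded_of_sSup hesup β hβ
    haveI : Small.{0} ↥(e δ ∩ Set.Iio β) := small_subset Set.inter_subset_left
    haveI : Small.{0} ↥(e δ ∩ Set.Iio x) := small_subset Set.inter_subset_left
    have h1 : otp (e δ ∩ Set.Iio β) ≤ otp (e δ ∩ Set.Iio x) :=
      otp_le_otp (fun b hb => ⟨hb.1, lt_trans hb.2 hxβ⟩)
    have h2 : otp (e δ ∩ Set.Iio x) < otp (e δ) := otp_inter_Iio_lt hxe
    have h3 : otp (e δ ∩ Set.Iio β) < μ.ord := lt_of_le_of_lt h1 (lt_of_lt_of_le h2 heotp)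
    have h4 : (otp (e δ ∩ Set.Iio β)).card < μ := Cardinal.lt_ord.mp h3
    rw [hμdef, Order.lt_succ_iff] at h4
    calc #↥(e δ ∩ Set.Iio β) = Cardinal.lift.{1} (otp (e δ ∩ Set.Iio β)).card :=
          mk_eq_lift_otp _
    _ ≤ Cardinal.lift.{1} θ₁ := Cardinal.lift_le.mpr h4
    _ < Cardinal.lift.{1} μ := Cardinal.lift_lt.mpr hθ₁μ
  set T := (Sstar ∩ Set.Iio δ) ∩ accSet (e δ) with hTdef
  have hTstat : IsStationaryIn T δ :=
    hδSstat.inter_club hℵ₀δ (isClubIn_accSet hℵ₀δ hesub hecl hesup)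
  -- facts about elements of T
  have hTe : ∀ α ∈ T, α ∈ e δ := fun α hα => hα.2.1
  have hTS₂ : ∀ α ∈ T, α ∈ S₂ := fun α hα => (he_coh δ hδS₂ α (hTe α hα)).1
  have hTeeq : ∀ α ∈ T, e α = e δ ∩ Set.Iio α := fun α hα => (he_coh δ hδS₂ α (hTe α hα)).2
  have hTS' : ∀ α ∈ T, α ∈ S' := by
    intro α hα
    rw [hS'def]
    exact ⟨hα.1.1, hTS₂ α hα⟩
  have hTδ : ∀ α ∈ T, α < δ := fun α hα => hα.1.2
  have hT0 : ∀ α ∈ T, α ≠ 0 := by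
    intro α hα h0
    have h2 := (hSsub hα.1.1).2
    rw [h0, Ordinal.cof_zero] at h2
    rw [← h2] at hθaleph0
    exact (Cardinal.zero_le ℵ₀).not_gt hθaleph0
  have hTclosed : ∀ (E' : Set Ordinal), IsClosedIn E' Λ → e δ ⊆ E' → ∀ α ∈ T, α ∈ E' :=
    fun E' hcl hsub α hα => mem_closed_of_acc hcl hsub hα.2 ((hTδ α hα).trans hδΛ) (hT0 α hα)
  have hTxie : ∀ α ∈ T, ∀ i < θ.ord, ξ α i ∈ e δ ∧ ξ α i < α := by
    intro α hα i hi
    have := hξmem α (hTS' α hα) i hi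
    rw [hTeeq α hα] at this
    exact ⟨this.1, this.2⟩
  -- the fibers
  set R : Ordinal → Set Ordinal :=
    fun i => {x | x ∈ e δ ∧ IsStationaryIn {α | α ∈ T ∧ ξ α i = x} δ} with hRdef
  set φ : Ordinal → Ordinal := fun x => otp (e δ ∩ Set.Iio x) with hφdef
  have hφlt : ∀ x ∈ e δ, φ x < μ.ord := fun x hx => lt_of_lt_of_le (otp_inter_Iio_lt hx) heotp
  have hφinj : ∀ x ∈ e δ, ∀ y ∈ e δ, φ x = φ y → x = y := by
    intro x hx y hy hxy
    rcases lt_trichotomy x y with h | h | h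
    · exact absurd hxy (otp_inter_lt_inter hx h).ne
    · exact h
    · exact absurd hxy.symm (otp_inter_lt_inter hy h).ne
  -- Claim A
  have hA : ∀ i, i < θ.ord → #↥(R i) < Cardinal.lift.{1} θ₁ := by
    intro i hi
    by_contra hge
    push_neg at hge
    obtain ⟨p, hpsub, hpcard⟩ := Cardinal.le_mk_iff_exists_subset.mp hge
    have hpe : p ⊆ e δ := fun x hx => (hpsub hx).1
    have hφsub : φ '' p ⊆ Set.Iio μ.ord := by
      rintro _ ⟨x, hxp, rfl⟩
      exact hφlt x (hpe hxp)
    have hbddim : BddAbove (φ '' p) := ⟨μ.ord, fun y hy => (hφsub hy).le⟩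
    have hβs : sSup (φ '' p) < μ.ord := by
      refine csSup_lt_of_mk_lt hφsub hμordpos ?_
      rw [hcofμord]
      calc #↥(φ '' p) ≤ #↥p := Cardinal.mk_image_le
      _ = Cardinal.lift.{1} θ₁ := hpcard
      _ < Cardinal.lift.{1} μ := Cardinal.lift_lt.mpr hθ₁μ
    set βs := sSup (φ '' p) with hβsdef
    set pp : ι := ⟨⟨βs, hβs⟩, ⟨i, hi⟩⟩ with hppdef
    have hsubE : Estar ⊆ Efn βs hβs i hi := by
      intro b hb
      exact (Set.mem_iInter.mp hb pp).1
    have hsubF : Estar ⊆ Ffn βs hβs i hi := by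
      intro b hb
      exact (Set.mem_iInter.mp hb pp).2
    have himsub : φ '' p ⊆ {ζ : Ordinal | ζ ≤ βs ∧
        IsStationaryIn
          (Efn βs hβs i hi ∩ Set.Iio δ ∩ {α | α ∈ S' ∧ min (otp (e (ξ α i))) βs = ζ}) δ} := by
      rintro _ ⟨x, hxp, rfl⟩
      have hxR : x ∈ R i := hpsub hxp
      have hζβs : φ x ≤ βs := le_csSup hbddim (Set.mem_image_of_mem φ hxp)
      refine ⟨hζβs, ?_⟩
      refine hxR.2.mono ?_
      rintro α ⟨hαT, hαξ⟩
      refine ⟨⟨?_, hTδ α hαT⟩, hTS' α hαT, ?_⟩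
      · exact hTclosed _ (hEclub βs hβs i hi).2.2 (hee.trans hsubE) α hαT
      · rw [hαξ]
        have hex : e x = e δ ∩ Set.Iio x := (he_coh δ hδS₂ x hxR.1).2
        rw [hex]
        exact min_eq_left hζβs
    have hcard2 : Cardinal.lift.{1} θ₁ ≤ #↥{ζ : Ordinal | ζ ≤ βs ∧
        IsStationaryIn
          (Efn βs hβs i hi ∩ Set.Iio δ ∩ {α | α ∈ S' ∧ min (otp (e (ξ α i))) βs = ζ}) δ} := by
      rw [← hpcard]
      rw [← Cardinal.mk_image_eq_of_injOn φ p (fun x hx y hy => hφinj x (hpe hx) y (hpe hy))]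
      exact Cardinal.mk_le_mk_of_subset himsub
    have hδin : δ ∈ ({δ' | δ' ∈ S₁ ∩ S₂ ∧ e δ' ⊆ Efn βs hβs i hi ∧
        Cardinal.lift.{1} θ₁ ≤ Cardinal.mk
          {ζ : Ordinal | ζ ≤ βs ∧
            IsStationaryIn
              (Efn βs hβs i hi ∩ Set.Iio δ' ∩
                {α | α ∈ S' ∧ min (otp (e (ξ α i))) βs = ζ}) δ'}} ∩ Ffn βs hβs i hi) :=
      ⟨⟨hδ12, hee.trans hsubE, hcard2⟩, hsubF hδEstar⟩
    rw [hdisj βs hβs i hi] at hδin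
    exact hδin
    -- Claim B: derive a contradiction
  set B := ⋃ i ∈ Set.Iio θ.ord, R i with hBdef
  have hBsub : B ⊆ Set.Iio δ := by
    refine Set.iUnion₂_subset ?_
    intro i _ x hx
    exact hesub hx.1
  have hBbdd : BddAbove B := ⟨δ, fun y hy => (hBsub hy).le⟩
  have hBcard : #↥B < Cardinal.lift.{1} μ := by
    refine lt_of_le_of_lt ?_ (Cardinal.lift_lt.mpr hθ₁μ)
    calc #↥B ≤ #↥(Set.Iio θ.ord) * ⨆ i : ↥(Set.Iio θ.ord), #↥(R i.1) :=
        Cardinal.mk_biUnion_le R (Set.Iio θ.ord)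
    _ ≤ Cardinal.lift.{1} θ * Cardinal.lift.{1} θ₁ := by
        refine mul_le_mul' ?_ ?_
        · rw [Ordinal.mk_Iio_ordinal, Cardinal.card_ord]
        · exact ciSup_le' (fun i => (hA i.1 i.2).le)
    _ = Cardinal.lift.{1} (θ * θ₁) := by rw [Cardinal.lift_mul]
    _ ≤ Cardinal.lift.{1} θ₁ := by
        rw [Cardinal.mul_eq_right (hθaleph0.le.trans hθ₁θ) hθ₁θ hθne0]
  set bstar := sSup B with hbstardef
  have hbstar : bstar < δ := csSup_lt_of_mk_lt hBsub hδlim.pos (by rw [hδcof]; exact hBcard)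
  -- find i* with stationary U
  have hU : ∃ i, i < θ.ord ∧ IsStationaryIn {α | α ∈ T ∧ bstar < α ∧ bstar < ξ α i} δ := by
    by_contra hno
    push_neg at hno
    have hCs : ∀ i : Ordinal, ∃ C, i < θ.ord →
        (IsClubIn C δ ∧ {α | α ∈ T ∧ bstar < α ∧ bstar < ξ α i} ∩ C = ∅) := by
      intro i
      by_cases hi : i < θ.ord
      · have := hno i hi
        rw [IsStationaryIn] at this
        push_neg at this
        obtain ⟨C, hC1, hC2⟩ := this
        exact ⟨C, fun _ => ⟨hC1, hC2⟩⟩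
      · exact ⟨Set.Iio δ, fun h => absurd h hi⟩
    choose Cc hCc using hCs
    haveI : Nonempty ↥(Set.Iio θ.ord) := ⟨⟨0, hθordpos⟩⟩
    have hInter : IsClubIn (⋂ i : ↥(Set.Iio θ.ord), Cc i.1) δ := by
      refine isClubIn_iInter hℵ₀δ ?_ (fun i => (hCc i.1 i.2).1)
      rw [Ordinal.mk_Iio_ordinal, Cardinal.card_ord, hδcof]
      exact Cardinal.lift_lt.mpr (lt_of_le_of_lt hθ₁θ hθ₁μ)
    have hT'' : IsStationaryIn (T ∩ {γ | bstar < γ ∧ γ < δ}) δ :=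
      hTstat.inter_club hℵ₀δ (isClubIn_Ioo hδlim hbstar)
    obtain ⟨α, hαT'', hαC⟩ := hT'' _ hInter
    have hαT : α ∈ T := hαT''.1
    have hbα : bstar < α := hαT''.2.1
    obtain ⟨y, hyim, hby⟩ := unbounded_of_sSup (hξsup α (hTS' α hαT)) bstar hbα
    obtain ⟨i, hiθ, hyeq⟩ := hyim
    have hαU : α ∈ {α | α ∈ T ∧ bstar < α ∧ bstar < ξ α i} := by
      refine ⟨hαT, hbα, ?_⟩
      rw [hyeq]
      exact hby
    have : α ∈ ({α | α ∈ T ∧ bstar < α ∧ bstar < ξ α i} ∩ Cc i) :=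
      ⟨hαU, Set.mem_iInter.mp hαC ⟨i, hiθ⟩⟩
    rw [(hCc i hiθ).2] at this
    exact this
  obtain ⟨istar, histar, hUstat⟩ := hU
  -- fibers above bstar are nonstationary
  have hnsfib : ∀ x, x ∈ e δ → bstar < x →
      ¬ IsStationaryIn {α | α ∈ T ∧ ξ α istar = x} δ := by
    intro x hx hbx hstat
    have hxB : x ∈ B := by
      refine Set.mem_biUnion histar ?_
      exact ⟨hx, hstat⟩
    exact absurd (le_csSup hBbdd hxB) (not_le.mpr hbx)
  have hDex : ∀ x : Ordinal, ∃ C, (x ∈ e δ ∧ bstar < x) →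
      (IsClubIn C δ ∧ {α | α ∈ T ∧ ξ α istar = x} ∩ C = ∅) := by
    intro x
    by_cases h : x ∈ e δ ∧ bstar < x
    · have := hnsfib x h.1 h.2
      rw [IsStationaryIn] at this
      push_neg at this
      obtain ⟨C, hC1, hC2⟩ := this
      exact ⟨C, fun _ => ⟨hC1, hC2⟩⟩
    · exact ⟨Set.Iio δ, fun h' => absurd h' h⟩
  choose Dc hDc using hDex
  set D' : Ordinal → Set Ordinal :=
    fun x => if h : x ∈ e δ ∧ bstar < x then Dc x else Set.Iio δ with hD'def
  have hD'club : ∀ x ∈ e δ, IsClubIn (D' x) δ := by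
    intro x hx
    simp only [hD'def]
    by_cases h : x ∈ e δ ∧ bstar < x
    · rw [dif_pos h]; exact (hDc x h).1
    · rw [dif_neg h]; exact isClubIn_Iio
  have hΔclub : IsClubIn {β | β < δ ∧ ∀ x ∈ e δ, x < β → β ∈ D' x} δ := by
    refine isClubIn_diagonal hℵ₀δ hesub ?_ hD'club
    intro β hβ
    rw [hδcof]
    exact hcard_e β hβ
  obtain ⟨α, hαU, hαΔ⟩ := hUstat _ hΔclub
  obtain ⟨hαT, hbα, hbξ⟩ := hαU
  obtain ⟨hxe, hxα⟩ := hTxie α hαT istar histar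
  have hαD' : α ∈ D' (ξ α istar) := hαΔ.2 (ξ α istar) hxe hxα
  simp only [hD'def] at hαD'
  rw [dif_pos ⟨hxe, hbξ⟩] at hαD'
  have : α ∈ ({α' | α' ∈ T ∧ ξ α' istar = ξ α istar} ∩ Dc (ξ α istar)) :=
    ⟨⟨hαT, rfl⟩, hαD'⟩
  rw [(hDc (ξ α istar) ⟨hxe, hbξ⟩).2] at this
  exact this
end
end

section
/- Under the standing setup, suppose β* < θ₁⁺ and h : S' → β* + 1 is a function such that for every club E of λ⁺ there are stationarily many δ ∈ S₁ ∩ S₂ with e_δ ⊆ E and |{ζ ≤ β* : E ∩ δ ∩ h⁻¹({ζ}) ∩ S' is stationary in δ}| ≥ θ₁. Then there exists γ* ≤ β* with cf(γ*) = ℵ₀ such that for every club E of λ⁺ there are stationarily many δ ∈ S₁ ∩ S₂ with e_δ ⊆ E and γ* = sup{ζ < γ* : h⁻¹({ζ}) ∩ S' ∩ E is stationary in δ}. -/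
noncomputable section

section Aux

open Set Ordinal Cardinal

lemma isStationaryIn_mono {S T : Set Ordinal} {δ : Ordinal} (hST : S ⊆ T)
    (hS : IsStationaryIn S δ) : IsStationaryIn T δ := fun C hC =>
  (hS C hC).mono (Set.inter_subset_inter_left _ hST)

lemma isClubIn_biInter_Iic {Λ βs : Ordinal} (hΛ : Order.IsSuccLimit Λ)
    (hcard : (Order.succ βs).card < Λ.cof) (hℵ₀ : ℵ₀ < Λ.cof)
    (F : Ordinal → Set Ordinal) (hF : ∀ γ ≤ βs, IsClubIn (F γ) Λ) :
    IsClubIn (⋂ γ ∈ Set.Iic βs, F γ) Λ := by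
  refine ⟨?_, ?_, ?_⟩
  · intro x hx
    exact (hF βs le_rfl).1 (Set.mem_iInter₂.1 hx βs (Set.mem_Iic.2 le_rfl))
  · intro β hβ
    have hpick : ∀ γ x, ∃ y, γ ≤ βs → x < Λ → (y ∈ F γ ∧ x ≤ y ∧ y < Λ) := by
      intro γ x
      by_cases hγ : γ ≤ βs
      · by_cases hx : x < Λ
        · obtain ⟨y, hy1, hy2⟩ := (hF γ hγ).2.1 x hx
          exact ⟨y, fun _ _ => ⟨hy1, hy2, (hF γ hγ).1 hy1⟩⟩
        · exact ⟨0, fun _ hc => absurd hc hx⟩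
      · exact ⟨0, fun hc => absurd hc hγ⟩
    choose pick hpick using hpick
    have hι : #(Order.succ βs).ToType < Λ.cof := by
      rw [Cardinal.mk_toType]; exact hcard
    set val : (Order.succ βs).ToType → Ordinal :=
      fun i => ((Ordinal.ToType.mk (o := Order.succ βs)).symm i : Ordinal) with hvaldef
    have hval : ∀ i, val i ≤ βs := fun i =>
      Order.lt_succ_iff.1 ((Ordinal.ToType.mk (o := Order.succ βs)).symm i).2
    set g : ℕ → Ordinal :=
      fun n => Nat.rec β (fun _ x => max (Order.succ x) (⨆ i, pick (val i) x)) n with hgdef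
    have hgs : ∀ n, g (n + 1) = max (Order.succ (g n)) (⨆ i, pick (val i) (g n)) :=
      fun n => rfl
    have hglt : ∀ n, g n < Λ := by
      intro n
      induction n with
      | zero => exact hβ
      | succ n ih =>
        rw [hgs]
        exact max_lt (hΛ.succ_lt ih) (Ordinal.iSup_lt_ord hι fun i =>
          (hpick (val i) (g n) (hval i) ih).2.2)
    have hgmono : ∀ n, g n < g (n + 1) := fun n =>
      lt_of_lt_of_le (Order.lt_succ_of_not_isMax (not_isMax (g n)))
        ((le_max_left _ _).trans_eq (hgs n).symm)
    have hα : (⨆ n, g n) < Λ :=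
      Ordinal.iSup_lt_ord (by rw [Cardinal.mk_nat]; exact hℵ₀) hglt
    refine ⟨⨆ n, g n, Set.mem_iInter₂.2 fun γ hγ => ?_,
      le_ciSup (Ordinal.bddAbove_range g) 0⟩
    set f : ℕ → Ordinal := fun n => pick γ (g n) with hfdef
    have hf1 : ∀ n, f n ∈ F γ ∧ g n ≤ f n ∧ f n < Λ := fun n => hpick γ (g n) hγ (hglt n)
    have hfle : ∀ n, f n ≤ g (n + 1) := by
      intro n
      set i₀ := Ordinal.ToType.mk (o := Order.succ βs) ⟨γ, Set.mem_Iio.2 (Order.lt_succ_iff.2 hγ)⟩ with hi₀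
      have hvi₀ : val i₀ = γ := by
        rw [hvaldef]; simp [hi₀]
      have : f n ≤ ⨆ i, pick (val i) (g n) := by
        rw [hfdef]
        simpa [hvi₀] using le_ciSup (Ordinal.bddAbove_range fun i => pick (val i) (g n)) i₀
      exact this.trans ((le_max_right _ _).trans_eq (hgs n).symm)
    have hsup : sSup (Set.range f) = ⨆ n, g n := by
      apply le_antisymm
      · exact csSup_le (Set.range_nonempty f) (by
          rintro x ⟨n, rfl⟩
          exact (hfle n).trans (le_ciSup (Ordinal.bddAbove_range g) (n + 1)))
      · exact ciSup_le fun n => (hf1 n).2.1.trans (le_csSup (Ordinal.bddAbove_range f) ⟨n, rfl⟩)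
    have := (hF γ hγ).2.2 (Set.range f)
      (by rintro x ⟨n, rfl⟩; exact (hf1 n).1) (Set.range_nonempty f)
      (by rw [hsup]; exact hα)
    rwa [hsup] at this
  · intro s hs hne hsup
    exact Set.mem_iInter₂.2 fun γ hγ =>
      (hF γ hγ).2.2 s (hs.trans (Set.biInter_subset_of_mem hγ)) hne hsup

lemma isClubIn_inter_s4 {Λ : Ordinal} (hΛ : Order.IsSuccLimit Λ) (hℵ₀ : ℵ₀ < Λ.cof)
    {A B : Set Ordinal} (hA : IsClubIn A Λ) (hB : IsClubIn B Λ) :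
    IsClubIn (A ∩ B) Λ := by
  have hcard : (Order.succ (1 : Ordinal)).card < Λ.cof := by
    have h2 : (Order.succ (1 : Ordinal)).card = 2 := by
      simp [Ordinal.card_succ, one_add_one_eq_two]
    rw [h2]
    exact lt_trans (by simpa using Cardinal.nat_lt_aleph0 2) hℵ₀
  have h := isClubIn_biInter_Iic hΛ hcard hℵ₀ (fun γ => if γ = 0 then A else B)
    (fun γ _ => by show IsClubIn (if γ = 0 then A else B) Λ; split_ifs <;> assumption)
  have heq : (⋂ γ ∈ Set.Iic (1 : Ordinal), (if γ = 0 then A else B)) = A ∩ B := by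
    ext x
    simp only [Set.mem_iInter, Set.mem_inter_iff, Set.mem_Iic]
    constructor
    · intro hx
      refine ⟨by simpa using hx 0 zero_le_one, ?_⟩
      have := hx 1 le_rfl
      rwa [if_neg (one_ne_zero : (1 : Ordinal) ≠ 0)] at this
    · rintro ⟨ha, hb⟩ γ hγ
      rcases lt_or_eq_of_le hγ with h1 | h1
      · rw [Ordinal.lt_one_iff_zero.1 h1, if_pos rfl]
        exact ha
      · rw [h1, if_neg (one_ne_zero : (1 : Ordinal) ≠ 0)]
        exact hb
  rwa [heq] at h

lemma exists_omega_seq {W : Set Ordinal} (hW : W.Infinite) :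
    ∃ g : ℕ → Ordinal, (∀ n, g n ∈ W) ∧ (∀ n, g n < g (n + 1)) := by
  set g : ℕ → Ordinal :=
    fun n => Nat.rec (sInf W) (fun _ x => sInf (W ∩ Set.Ioi x)) n with hgdef
  have key : ∀ n, g n ∈ W ∧ (W ∩ Set.Iic (g n)).Finite ∧ (n ≠ 0 → ∀ m, n = m + 1 → g m < g n) := by
    intro n
    induction n with
    | zero =>
      refine ⟨csInf_mem hW.nonempty, ?_, by simp⟩
      apply Set.Finite.subset (Set.finite_singleton (sInf W))
      rintro ζ ⟨hζW, hζle⟩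
      exact Set.mem_singleton_iff.2 (le_antisymm hζle (csInf_le (OrderBot.bddBelow W) hζW))
    | succ n ih =>
      have hne : (W ∩ Set.Ioi (g n)).Nonempty := by
        rw [Set.nonempty_iff_ne_empty]
        intro hempty
        apply hW
        have : W ⊆ Set.Iic (g n) := by
          intro ζ hζ
          by_contra hc
          exact Set.eq_empty_iff_forall_notMem.1 hempty ζ ⟨hζ, not_le.1 (Set.mem_Iic.not.1 hc)⟩
        have : W = W ∩ Set.Iic (g n) := by
          rw [Set.inter_eq_left.2 this]
        rw [this]
        exact ih.2.1
      have hmem : g (n + 1) ∈ W ∩ Set.Ioi (g n) := csInf_mem hne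
      refine ⟨hmem.1, ?_, fun _ m hm => ?_⟩
      · apply Set.Finite.subset (ih.2.1.union (Set.finite_singleton (g (n + 1))))
        rintro ζ ⟨hζW, hζle⟩
        by_cases hc : ζ ≤ g n
        · exact Or.inl ⟨hζW, hc⟩
        · right
          have : g (n + 1) ≤ ζ := csInf_le (OrderBot.bddBelow _) ⟨hζW, not_le.1 hc⟩
          exact Set.mem_singleton_iff.2 (le_antisymm hζle this)
      · have : m = n := by omega
        rw [this]
        exact hmem.2
  exact ⟨g, fun n => (key n).1, fun n => (key (n + 1)).2.2 (by omega) n rfl⟩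

lemma cof_iSup_eq_aleph0 {g : ℕ → Ordinal.{0}} (hg : ∀ n, g n < g (n + 1)) :
    (⨆ n, g n).cof = ℵ₀ := by
  have hlt : ∀ n, g n < ⨆ n, g n := fun n =>
    (hg n).trans_le (le_ciSup (Ordinal.bddAbove_range g) (n + 1))
  have hub : (⨆ n, g n).cof ≤ ℵ₀ := by
    have := @Ordinal.cof_iSup_le ℕ g hlt
    rwa [Cardinal.mk_nat] at this
  have hlimit : Order.IsSuccLimit (⨆ n, g n) := by
    rw [Ordinal.isSuccLimit_iff, Order.isSuccPrelimit_iff_succ_lt]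
    refine ⟨?_, ?_⟩
    · exact fun hc => absurd (hc ▸ hlt 0) (not_lt_of_ge zero_le)
    · intro a ha
      obtain ⟨n, hn⟩ := (lt_ciSup_iff (Ordinal.bddAbove_range g)).1 ha
      exact lt_of_le_of_lt (Order.succ_le_of_lt hn) (hlt n)
  exact le_antisymm hub (Ordinal.aleph0_le_cof.2 hlimit)

end Aux

/-- Subclaim 1.4. -/
theorem stmt_4
    (lam θ₁ θ : Cardinal.{0})
    (hlamreg : lam.IsRegular) (hlamθ₁ : Order.succ θ₁ < lam) (hθ₁θ : θ ≤ θ₁)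
    (hθreg : θ.IsRegular) (hθ : Cardinal.aleph 1 < θ)
    (Sstar S₁ S₂ S' : Set Ordinal) (e : Ordinal → Set Ordinal)
    (hSsub : Sstar ⊆ cofSet θ (Order.succ lam).ord)
    (hSstat : IsStationaryIn Sstar (Order.succ lam).ord)
    (hS₁def : S₁ = {δ | δ < (Order.succ lam).ord ∧ δ.cof = Order.succ θ₁ ∧
      IsStationaryIn (Sstar ∩ Set.Iio δ) δ})
    (hS₁stat : IsStationaryIn S₁ (Order.succ lam).ord)
    (hS₂ : ∀ δ ∈ S₂, δ < (Order.succ lam).ord ∧ Order.IsSuccLimit δ ∧ δ.cof ≤ Order.succ θ₁)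
    (he_closed : ∀ δ ∈ S₂, e δ ⊆ Set.Iio δ ∧ IsClosedIn (e δ) δ ∧
      otp (e δ) ≤ (Order.succ θ₁).ord)
    (he_coh : ∀ δ ∈ S₂, ∀ β ∈ e δ, β ∈ S₂ ∧ e β = e δ ∩ Set.Iio β)
    (he_sup : ∀ δ ∈ S₂, δ.cof ≠ Cardinal.aleph 1 → sSup (e δ) = δ)
    (hS₁S₂stat : IsStationaryIn (S₁ ∩ S₂) (Order.succ lam).ord)
    (hguess : ∀ E, IsClubIn E (Order.succ lam).ord →
      IsStationaryIn {δ | δ ∈ S₁ ∩ S₂ ∧ e δ ⊆ E} (Order.succ lam).ord)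
    (hS'def : S' = Sstar ∩ S₂)
    (βs : Ordinal) (hβs : βs < (Order.succ θ₁).ord)
    (h : Ordinal → Ordinal) (hh : ∀ α ∈ S', h α ≤ βs)
    (hyp : ∀ E, IsClubIn E (Order.succ lam).ord →
      IsStationaryIn {δ | δ ∈ S₁ ∩ S₂ ∧ e δ ⊆ E ∧
        Cardinal.lift.{1} θ₁ ≤ Cardinal.mk
          {ζ : Ordinal | ζ ≤ βs ∧
            IsStationaryIn (E ∩ Set.Iio δ ∩ {α | α ∈ S' ∧ h α = ζ}) δ}}
        (Order.succ lam).ord) :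
    ∃ γs ≤ βs, γs.cof = Cardinal.aleph0 ∧
      ∀ E, IsClubIn E (Order.succ lam).ord →
        IsStationaryIn {δ | δ ∈ S₁ ∩ S₂ ∧ e δ ⊆ E ∧
          γs = sSup {ζ | ζ < γs ∧
            IsStationaryIn ({α | α ∈ S' ∧ h α = ζ} ∩ E) δ}}
          (Order.succ lam).ord := by
  classical
  set Λ := (Order.succ lam).ord with hΛdef
  have hlaminf : Cardinal.aleph0 ≤ lam := hlamreg.aleph0_le
  have hΛlim : Order.IsSuccLimit Λ := Cardinal.isSuccLimit_ord (hlaminf.trans (Order.le_succ lam))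
  have hcofΛ : Λ.cof = Order.succ lam := (Cardinal.isRegular_succ hlaminf).cof_eq
  have haacof : Cardinal.aleph0 < Λ.cof := by
    rw [hcofΛ]
    exact hlaminf.trans_lt (Order.lt_succ_of_not_isMax (not_isMax lam))
  have hθ₁inf : Cardinal.aleph0 ≤ θ₁ := ((Cardinal.aleph0_le_aleph 1).trans hθ.le).trans hθ₁θ
  have hcard : (Order.succ βs).card < Λ.cof := by
    have h1 : Order.succ βs < (Order.succ θ₁).ord :=
      (Cardinal.isSuccLimit_ord (hθ₁inf.trans (Order.le_succ θ₁))).succ_lt hβs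
    have h2 : (Order.succ βs).card < Order.succ θ₁ := Cardinal.lt_ord.1 h1
    rw [hcofΛ]
    exact h2.trans (hlamθ₁.trans (Order.lt_succ_of_not_isMax (not_isMax lam)))
  by_contra hcon
  push_neg at hcon
  have hchoice : ∀ γ : Ordinal, ∃ P : Set Ordinal, IsClubIn P Λ ∧
      (γ ≤ βs → γ.cof = Cardinal.aleph0 →
        {δ | δ ∈ S₁ ∩ S₂ ∧ e δ ⊆ P ∧
          γ = sSup {ζ | ζ < γ ∧ IsStationaryIn ({α | α ∈ S' ∧ h α = ζ} ∩ P) δ}} ∩ P = ∅) := by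
    intro γ
    by_cases h1 : γ ≤ βs ∧ γ.cof = Cardinal.aleph0
    · obtain ⟨E, hE, hnot⟩ := hcon γ h1.1 h1.2
      rw [IsStationaryIn] at hnot
      push_neg at hnot
      obtain ⟨D, hD, hDempty⟩ := hnot
      refine ⟨E ∩ D, isClubIn_inter_s4 hΛlim haacof hE hD, fun _ hcofγ => ?_⟩
      rw [Set.eq_empty_iff_forall_notMem]
      rintro δ ⟨⟨hδ12, hδe, hδsup⟩, hδE, hδD⟩
      have hγne : γ ≠ 0 := by
        intro hz
        rw [hz, Ordinal.cof_zero] at hcofγ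
        exact Cardinal.aleph0_ne_zero hcofγ.symm
      set Z' := {ζ | ζ < γ ∧ IsStationaryIn ({α | α ∈ S' ∧ h α = ζ} ∩ (E ∩ D)) δ} with hZ'
      set Z := {ζ | ζ < γ ∧ IsStationaryIn ({α | α ∈ S' ∧ h α = ζ} ∩ E) δ} with hZ
      have hZ'ne : Z'.Nonempty := by
        rw [Set.nonempty_iff_ne_empty]
        intro hc
        rw [hc, csSup_empty] at hδsup
        exact hγne (by simpa using hδsup)
      have hsub : Z' ⊆ Z := fun ζ hζ =>
        ⟨hζ.1, isStationaryIn_mono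
          (Set.inter_subset_inter_right _ Set.inter_subset_left) hζ.2⟩
      have hbdd : BddAbove Z := ⟨γ, fun ζ hζ => hζ.1.le⟩
      have hZsup : γ = sSup Z := by
        apply le_antisymm
        · calc γ = sSup Z' := hδsup
            _ ≤ sSup Z := csSup_le_csSup hbdd hZ'ne hsub
        · exact csSup_le (hZ'ne.mono hsub) fun ζ hζ => hζ.1.le
      apply Set.eq_empty_iff_forall_notMem.1 hDempty δ
      exact ⟨⟨hδ12, hδe.trans Set.inter_subset_left, hZsup⟩, hδD⟩
    · refine ⟨Set.Iio Λ, ?_, fun hγ hcofγ => absurd ⟨hγ, hcofγ⟩ h1⟩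
      exact ⟨fun x hx => hx, fun β hβ => ⟨β, hβ, le_rfl⟩, fun s hs hne hsup => hsup⟩
  choose P hPclub hPprop using hchoice
  set E₀ := ⋂ γ ∈ Set.Iic βs, P γ with hE₀
  have hE₀club : IsClubIn E₀ Λ :=
    isClubIn_biInter_Iic hΛlim hcard haacof P fun γ _ => hPclub γ
  have hE₀sub : ∀ γ ≤ βs, E₀ ⊆ P γ := fun γ hγ =>
    Set.biInter_subset_of_mem (Set.mem_Iic.2 hγ)
  obtain ⟨δ, hδT, hδE₀⟩ := hyp E₀ hE₀club E₀ hE₀club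
  obtain ⟨hδ12, hδe, hδW⟩ := hδT
  set W := {ζ : Ordinal | ζ ≤ βs ∧
    IsStationaryIn (E₀ ∩ Set.Iio δ ∩ {α | α ∈ S' ∧ h α = ζ}) δ} with hWdef
  have hWinf : W.Infinite := by
    have hW : (Cardinal.aleph0 : Cardinal.{1}) ≤ Cardinal.mk W := by
      calc (Cardinal.aleph0 : Cardinal.{1}) = Cardinal.lift.{1} Cardinal.aleph0 := Cardinal.lift_aleph0.symm
        _ ≤ Cardinal.lift.{1} θ₁ := Cardinal.lift_le.2 hθ₁inf
        _ ≤ _ := hδW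
    exact Set.infinite_coe_iff.1 (Cardinal.infinite_iff.2 hW)
  obtain ⟨g, hgW, hgmono⟩ := exists_omega_seq hWinf
  set γ := ⨆ n, g n with hγdef
  have hγβs : γ ≤ βs := ciSup_le fun n => (hgW n).1
  have hγcof : γ.cof = Cardinal.aleph0 := cof_iSup_eq_aleph0 hgmono
  have hempty := hPprop γ hγβs hγcof
  apply Set.eq_empty_iff_forall_notMem.1 hempty δ
  have hglt : ∀ n, g n < γ := fun n =>
    (hgmono n).trans_le (le_ciSup (Ordinal.bddAbove_range g) (n + 1))
  have hZmem : ∀ n, g n ∈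
      {ζ | ζ < γ ∧ IsStationaryIn ({α | α ∈ S' ∧ h α = ζ} ∩ P γ) δ} := by
    intro n
    refine ⟨hglt n, ?_⟩
    refine isStationaryIn_mono ?_ (hgW n).2
    intro x hx
    exact ⟨hx.2, hE₀sub γ hγβs hx.1.1⟩
  refine ⟨⟨hδ12, hδe.trans (hE₀sub γ hγβs), ?_⟩, hE₀sub γ hγβs hδE₀⟩
  apply le_antisymm
  · exact ciSup_le fun n => le_csSup ⟨γ, fun ζ hζ => hζ.1.le⟩ (hZmem n)
  · exact csSup_le ⟨g 0, hZmem 0⟩ fun ζ hζ => hζ.1.le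
end
end

section
/- Let λ be a regular uncountable cardinal and ⟨c_α : α < λ⁺⟩ a sequence such that for each limit ordinal α < λ⁺, c_α is a club of α with otp(c_α) ≤ λ, and c_{γ+1} = {γ} for each γ. For each limit ordinal δ < λ⁺ define C_δ^0 = c_δ and C_δ^{n+1} = C_δ^n ∪ {α : there exists β ∈ nacc(C_δ^n) with sup(β ∩ C_δ^n) < α < β and α ∈ c_β}. Then for every limit ordinal δ < λ⁺ and every n < ω, C_δ^n is a club of δ and otp(C_δ^n) ≤ λ^{n+1} (ordinal exponentiation, with λ regarded as an initial ordinal). -/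
noncomputable section

theorem otp_le_iff {C : Set Ordinal.{0}} (h : Small.{0} C) {o : Ordinal.{0}} :
    otp C ≤ o ↔ ∃ f : Ordinal → Ordinal, StrictMonoOn f C ∧ ∀ x ∈ C, f x < o := by
  classical
  letI := h
  haveI hwo : IsWellOrder (Shrink C)
      (fun x y => ((equivShrink C).symm x : Ordinal) < ((equivShrink C).symm y : Ordinal)) :=
    RelEmbedding.isWellOrder
      (⟨⟨fun x => ((equivShrink C).symm x : Ordinal),
          fun a b hab => (equivShrink C).symm.injective (Subtype.coe_injective hab)⟩,
        Iff.rfl⟩ :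
        (fun x y : Shrink C =>
            ((equivShrink C).symm x : Ordinal) < ((equivShrink C).symm y : Ordinal)) ↪r
          ((· < ·) : Ordinal → Ordinal → Prop))
  have hotp : otp C = Ordinal.type
      (fun x y : Shrink C =>
        ((equivShrink C).symm x : Ordinal) < ((equivShrink C).symm y : Ordinal)) := by
    rw [otp, dif_pos h]
  letI : IsWellOrder o.ToType (· < ·) := isWellOrder_lt
  rw [hotp]
  constructor
  · intro hle
    have hle' : Ordinal.type
        (fun x y : Shrink C =>
          ((equivShrink C).symm x : Ordinal) < ((equivShrink C).symm y : Ordinal)) ≤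
        Ordinal.type ((· < ·) : o.ToType → o.ToType → Prop) := by
      rwa [Ordinal.type_toType]
    obtain ⟨e⟩ := Ordinal.type_le_iff'.1 hle'
    refine ⟨fun x => if hx : x ∈ C then
        ((Ordinal.ToType.mk (o := o)).symm (e (equivShrink C ⟨x, hx⟩)) : Ordinal) else 0, ?_, ?_⟩
    · intro x hx y hy hxy
      simp only [dif_pos hx, dif_pos hy]
      rw [Subtype.coe_lt_coe]
      apply (Ordinal.ToType.mk (o := o)).symm.strictMono
      apply e.map_rel_iff.2
      simpa using hxy
    · intro x hx
      simp only [dif_pos hx]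
      exact ((Ordinal.ToType.mk (o := o)).symm (e (equivShrink C ⟨x, hx⟩))).2
  · rintro ⟨f, hmono, hbd⟩
    have hle' : Ordinal.type
        (fun x y : Shrink C =>
          ((equivShrink C).symm x : Ordinal) < ((equivShrink C).symm y : Ordinal)) ≤
        Ordinal.type ((· < ·) : o.ToType → o.ToType → Prop) := by
      apply Ordinal.type_le_iff'.2
      refine ⟨⟨⟨fun z => Ordinal.ToType.mk (o := o) ⟨f ((equivShrink C).symm z : Ordinal),
        Set.mem_Iio.2 (hbd _ ((equivShrink C).symm z).2)⟩, ?_⟩, ?_⟩⟩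
      · intro a b hab
        have h2 : f ((equivShrink C).symm a : Ordinal) = f ((equivShrink C).symm b : Ordinal) :=
          congrArg Subtype.val ((Ordinal.ToType.mk (o := o)).injective hab)
        have : ((equivShrink C).symm a : Ordinal) = ((equivShrink C).symm b : Ordinal) :=
          hmono.injOn ((equivShrink C).symm a).2 ((equivShrink C).symm b).2 h2
        exact (equivShrink C).symm.injective (Subtype.coe_injective this)
      · intro a b
        show Ordinal.ToType.mk _ < Ordinal.ToType.mk _ ↔ _
        rw [(Ordinal.ToType.mk (o := o)).lt_iff_lt, Subtype.mk_lt_mk]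
        exact hmono.lt_iff_lt ((equivShrink C).symm a).2 ((equivShrink C).symm b).2
    rwa [Ordinal.type_toType] at hle'

/-- Note 1.6(1): each C_δ^n is a club of δ of order type at most λ^{n+1}. -/
theorem stmt_6
    (lam : Cardinal.{0}) (hlamreg : lam.IsRegular) (hlamunc : Cardinal.aleph0 < lam)
    (c : Ordinal → Set Ordinal)
    (hc : ∀ α < (Order.succ lam).ord, Order.IsSuccLimit α →
      IsClubIn (c α) α ∧ otp (c α) ≤ lam.ord)
    (hcsucc : ∀ γ : Ordinal, c (γ + 1) = {γ})
    (C : Ordinal → ℕ → Set Ordinal)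
    (hC0 : ∀ δ, C δ 0 = c δ)
    (hCsucc : ∀ δ n, C δ (n + 1) = C δ n ∪
      {α | ∃ β ∈ naccSet (C δ n), sSup (C δ n ∩ Set.Iio β) < α ∧ α < β ∧ α ∈ c β})
    :
    ∀ δ < (Order.succ lam).ord, Order.IsSuccLimit δ → ∀ n : ℕ,
      IsClubIn (C δ n) δ ∧ otp (C δ n) ≤ lam.ord ^ ((n : Ordinal) + 1) := by
  intro δ hδ hδlim
  classical
  have hΛlim : Order.IsSuccLimit lam.ord := Cardinal.isSuccLimit_ord hlamunc.le
  have hΛpos : (0 : Ordinal) < lam.ord := hΛlim.pos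
  -- family of embeddings for the local clubs
  have hH : ∀ β : Ordinal, ∃ h : Ordinal → Ordinal,
      0 < β → β < δ → StrictMonoOn h (c β) ∧ ∀ x ∈ c β, h x < lam.ord := by
    intro β
    rcases Ordinal.zero_or_succ_or_isSuccLimit β with h0 | ⟨γ, hγ⟩ | hβlim
    · exact ⟨fun _ => 0, fun hpos _ => absurd h0 hpos.ne'⟩
    · refine ⟨fun _ => 0, fun _ _ => ⟨?_, fun x _ => hΛpos⟩⟩
      intro x hx y hy hxy
      have hcβ : c β = {γ} := by rw [← hγ, ← Ordinal.add_one_eq_succ]; exact hcsucc γ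
      rw [hcβ] at hx hy
      rw [Set.mem_singleton_iff] at hx hy
      rw [hx, hy] at hxy
      exact absurd hxy (lt_irrefl γ)
    · by_cases hβδ : β < δ
      · obtain ⟨hclubβ, hotpβ⟩ := hc β (hβδ.trans hδ) hβlim
        have hsm : Small.{0} (c β) := small_subset hclubβ.1
        obtain ⟨h, h1, h2⟩ := (otp_le_iff hsm).1 hotpβ
        exact ⟨h, fun _ _ => ⟨h1, h2⟩⟩
      · exact ⟨fun _ => 0, fun _ h => absurd h hβδ⟩
  choose H hHspec using hH
  have key : ∀ n : ℕ, IsClubIn (C δ n) δ ∧ ∃ f : Ordinal → Ordinal,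
      StrictMonoOn f (C δ n) ∧ ∀ x ∈ C δ n, f x < lam.ord ^ ((n : Ordinal) + 1) := by
    intro n
    induction n with
    | zero =>
      rw [hC0 δ]
      obtain ⟨hclubδ, hotpδ⟩ := hc δ hδ hδlim
      refine ⟨hclubδ, ?_⟩
      obtain ⟨f, h1, h2⟩ := (otp_le_iff (small_subset hclubδ.1)).1 hotpδ
      refine ⟨f, h1, fun x hx => lt_of_lt_of_le (h2 x hx) ?_⟩
      simp
    | succ n ih =>
      obtain ⟨hclub, f, hf1, hf2⟩ := ih
      have hCsub : C δ n ⊆ Set.Iio δ := hclub.1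
      set New := {α | ∃ β ∈ naccSet (C δ n), sSup (C δ n ∩ Set.Iio β) < α ∧ α < β ∧ α ∈ c β}
        with hNewdef
      have hCs : C δ (n+1) = C δ n ∪ New := hCsucc δ n
      have fact1 : ∀ β, ∀ y ∈ C δ n, y < β → y ≤ sSup (C δ n ∩ Set.Iio β) := by
        intro β y hy hyβ
        exact le_csSup ⟨β, fun z hz => hz.2.le⟩ ⟨hy, hyβ⟩
      have hwit : ∀ x, x ∈ New →
          ∃ β, β ∈ naccSet (C δ n) ∧ sSup (C δ n ∩ Set.Iio β) < x ∧ x < β ∧ x ∈ c β :=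
        fun x hx => hx
      choose W hW using hwit
      have hWCn : ∀ x (hx : x ∈ New), W x hx ∈ C δ n := fun x hx => (hW x hx).1.1
      have hsub1 : C δ (n+1) ⊆ Set.Iio δ := by
        rw [hCs]; rintro x (hx | hx)
        · exact hCsub hx
        · exact lt_trans (hW x hx).2.2.1 (hCsub (hWCn x hx))
      have hclub' : IsClubIn (C δ (n+1)) δ := by
        refine ⟨hsub1, ?_, ?_⟩
        · intro b hb
          obtain ⟨γ, hγ, hbγ⟩ := hclub.2.1 b hb
          exact ⟨γ, by rw [hCs]; exact Or.inl hγ, hbγ⟩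
        · intro s hs hne hlt
          by_cases hσs : sSup s ∈ s
          · exact hs hσs
          have hsδ : ∀ z ∈ s, z < δ := fun z hz => hsub1 (hs hz)
          have hbdd : BddAbove s := ⟨δ, fun z hz => (hsδ z hz).le⟩
          have hlts : ∀ z ∈ s, z < sSup s := fun z hz =>
            lt_of_le_of_ne (le_csSup hbdd hz) (fun h => hσs (h ▸ hz))
          have hcof : ∀ w, w < sSup s → ∃ z ∈ s, w < z := fun w hw =>
            exists_lt_of_lt_csSup hne hw
          by_cases hA : ∀ w, w < sSup s → ∃ z ∈ C δ n, w < z ∧ z < sSup s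
          · have hTne : (C δ n ∩ Set.Iio (sSup s)).Nonempty := by
              obtain ⟨z, hz⟩ := hne
              obtain ⟨u, hu1, _, hu3⟩ := hA z (hlts z hz)
              exact ⟨u, hu1, hu3⟩
            have hTbdd : BddAbove (C δ n ∩ Set.Iio (sSup s)) :=
              ⟨sSup s, fun z hz => hz.2.le⟩
            have hsup : sSup (C δ n ∩ Set.Iio (sSup s)) = sSup s := by
              refine le_antisymm (csSup_le hTne fun z hz => hz.2.le) ?_
              by_contra hlt2
              push_neg at hlt2
              obtain ⟨u, hu1, hu2, hu3⟩ := hA _ hlt2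
              exact absurd (le_csSup hTbdd ⟨hu1, hu3⟩) (not_le.2 hu2)
            have hmem := hclub.2.2 _ Set.inter_subset_left hTne (by rw [hsup]; exact hlt)
            rw [hsup] at hmem
            rw [hCs]; exact Or.inl hmem
          · push_neg at hA
            obtain ⟨x₀, hx₀σ, hA⟩ := hA
            have hCle : ∀ z ∈ C δ n, z < sSup s → z ≤ x₀ := fun z hz hzσ =>
              le_of_not_gt fun h => absurd (hA z hz h) (not_le.2 hzσ)
            obtain ⟨y, hys, hx₀y⟩ := hcof x₀ hx₀σ
            have hyσ := hlts y hys
            have hyN : y ∈ New := by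
              have h := hs hys; rw [hCs] at h
              rcases h with h | h
              · exact absurd (hCle y h hyσ) (not_le.2 hx₀y)
              · exact h
            obtain ⟨β, hβn, hboty, hyβ, hycβ⟩ := hyN
            have hσβ : sSup s ≤ β := le_of_not_gt fun h =>
              absurd (hCle β hβn.1 h) (not_le.2 (lt_trans hx₀y hyβ))
            rcases eq_or_lt_of_le hσβ with heq | hσltβ
            · rw [hCs]; exact Or.inl (by rw [heq]; exact hβn.1)
            · have hsub' : ∀ z ∈ s, x₀ < z → z ∈ c β ∧ sSup (C δ n ∩ Set.Iio β) < z := by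
                intro z hzs hx₀z
                have hzσ := hlts z hzs
                have hzN : z ∈ New := by
                  have h := hs hzs; rw [hCs] at h
                  rcases h with h | h
                  · exact absurd (hCle z h hzσ) (not_le.2 hx₀z)
                  · exact h
                obtain ⟨β', hβ'n, hbotz, hzβ', hzcβ'⟩ := hzN
                have hσβ' : sSup s ≤ β' := le_of_not_gt fun h =>
                  absurd (hCle β' hβ'n.1 h) (not_le.2 (lt_trans hx₀z hzβ'))
                have hββ' : β' = β := by
                  rcases lt_trichotomy β' β with h | h | h
                  · have h1 := fact1 β β' hβ'n.1 h
                    exact absurd (lt_of_lt_of_le (hboty.trans hyσ) hσβ') (not_lt.2 h1)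
                  · exact h
                  · have h1 := fact1 β' β hβn.1 h
                    exact absurd (lt_of_lt_of_le (hbotz.trans hzσ) hσβ) (not_lt.2 h1)
                rw [hββ'] at hzcβ' hbotz
                exact ⟨hzcβ', hbotz⟩
              set s' := {z ∈ s | x₀ < z} with hs'def
              have hs'ne : s'.Nonempty := ⟨y, hys, hx₀y⟩
              have hs'bdd : BddAbove s' := ⟨δ, fun z hz => (hsδ z hz.1).le⟩
              have hsups' : sSup s' = sSup s := by
                refine le_antisymm (csSup_le hs'ne fun z hz => (hlts z hz.1).le) ?_
                by_contra hlt2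
                push_neg at hlt2
                obtain ⟨u, hus, huw⟩ := hcof (max (sSup s') x₀) (max_lt hlt2 hx₀σ)
                have hu' : u ∈ s' := ⟨hus, lt_of_le_of_lt (le_max_right _ _) huw⟩
                exact absurd (le_csSup hs'bdd hu')
                  (not_le.2 (lt_of_le_of_lt (le_max_left _ _) huw))
              rcases Ordinal.zero_or_succ_or_isSuccLimit β with h0 | ⟨γ, hγ⟩ | hβlim
              · rw [h0] at hyβ; exact absurd hyβ (not_lt_of_ge (zero_le : (0 : Ordinal) ≤ y))
              · have hcβ : c β = {γ} := by
                  rw [← hγ, ← Ordinal.add_one_eq_succ]; exact hcsucc γ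
                have hs'γ : s' ⊆ {γ} := fun z hz => by
                  have h := (hsub' z hz.1 hz.2).1; rwa [hcβ] at h
                have hs'eq : s' = {γ} := by
                  rcases Set.subset_singleton_iff_eq.1 hs'γ with h | h
                  · exact absurd h (Set.nonempty_iff_ne_empty.1 hs'ne)
                  · exact h
                have hσγ : sSup s = γ := by rw [← hsups', hs'eq, csSup_singleton]
                have hyγ : y = γ := Set.mem_singleton_iff.1 (hs'γ ⟨hys, hx₀y⟩)
                exact absurd (by rw [hσγ, ← hyγ]; exact hys) hσs
              · have hβδ2 : β < δ := hCsub hβn.1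
                have hccβ := (hc β (hβδ2.trans hδ) hβlim).1
                have hmem : sSup s' ∈ c β :=
                  hccβ.2.2 s' (fun z hz => (hsub' z hz.1 hz.2).1) hs'ne
                    (by rw [hsups']; exact hσltβ)
                rw [hsups'] at hmem
                rw [hCs]
                exact Or.inr ⟨β, hβn, hboty.trans hyσ, hσltβ, hmem⟩
      refine ⟨hclub', ?_⟩
      -- useful ordering facts for witnesses
      have horder : ∀ x (hx : x ∈ New), ∀ y ∈ C δ n, x < y → W x hx ≤ y := by
        intro x hx y hy hxy
        by_contra hlt2
        push_neg at hlt2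
        have h1 := fact1 (W x hx) y hy hlt2
        exact absurd ((hW x hx).2.1.trans hxy) (not_lt.2 h1)
      have hWW : ∀ x (hx : x ∈ New), ∀ y (hy : y ∈ New), x < y → W x hx ≤ W y hy := by
        intro x hx y hy hxy
        by_contra h
        push_neg at h
        have h1 := fact1 (W x hx) (W y hy) (hWCn y hy) h
        exact absurd ((hW x hx).2.1.trans (hxy.trans (hW y hy).2.2.1)) (not_lt.2 h1)
      have step1 : ∀ {a b : Ordinal}, a < b → lam.ord * a + lam.ord ≤ lam.ord * b := by
        intro a b h
        rw [← Ordinal.mul_succ]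
        exact mul_le_mul_right (Order.succ_le_of_lt h) _
      have step2 : ∀ x (hx : x ∈ New), H (W x hx) x + 1 < lam.ord := by
        intro x hx
        have h0 : 0 < W x hx := lt_of_le_of_lt (zero_le : (0 : Ordinal) ≤ x) (hW x hx).2.2.1
        have hlt := (hHspec (W x hx) h0 (hCsub (hWCn x hx))).2 x (hW x hx).2.2.2
        rw [Ordinal.add_one_eq_succ]
        exact hΛlim.succ_lt hlt
      refine ⟨fun x => if hx : x ∈ New then
          lam.ord * f (W x hx) + H (W x hx) x + 1 else lam.ord * f x + lam.ord, ?_, ?_⟩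
      · -- strict monotonicity
        intro x hx' y hy' hxy
        rw [hCs] at hx' hy'
        by_cases hxN : x ∈ New <;> by_cases hyN : y ∈ New
        · simp only [dif_pos hxN, dif_pos hyN]
          have hle := hWW x hxN y hyN hxy
          rcases eq_or_lt_of_le hle with heq | hlt2
          · rw [heq, add_assoc, add_assoc]
            apply add_lt_add_right
            rw [Ordinal.add_one_eq_succ, Ordinal.add_one_eq_succ, Order.succ_lt_succ_iff]
            have h0 : 0 < W y hyN := lt_of_le_of_lt (zero_le : (0 : Ordinal) ≤ y) (hW y hyN).2.2.1
            exact (hHspec (W y hyN) h0 (hCsub (hWCn y hyN))).1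
              (by rw [← heq]; exact (hW x hxN).2.2.2) (hW y hyN).2.2.2 hxy
          · have hfW : f (W x hxN) < f (W y hyN) := hf1 (hWCn x hxN) (hWCn y hyN) hlt2
            calc lam.ord * f (W x hxN) + H (W x hxN) x + 1
                < lam.ord * f (W x hxN) + lam.ord := by
                  rw [add_assoc]; exact add_lt_add_right (step2 x hxN) _
              _ ≤ lam.ord * f (W y hyN) := step1 hfW
              _ ≤ lam.ord * f (W y hyN) + (H (W y hyN) y + 1) := le_self_add
              _ = lam.ord * f (W y hyN) + H (W y hyN) y + 1 := by rw [add_assoc]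
        · have hyC : y ∈ C δ n := hy'.resolve_right hyN
          simp only [dif_pos hxN, dif_neg hyN]
          have hle := horder x hxN y hyC hxy
          have hfle : f (W x hxN) ≤ f y := by
            rcases eq_or_lt_of_le hle with h | h
            · rw [h]
            · exact (hf1 (hWCn x hxN) hyC h).le
          calc lam.ord * f (W x hxN) + H (W x hxN) x + 1
              < lam.ord * f (W x hxN) + lam.ord := by
                rw [add_assoc]; exact add_lt_add_right (step2 x hxN) _
            _ ≤ lam.ord * f y + lam.ord := add_le_add_left (mul_le_mul_right hfle _) _
        · have hxC : x ∈ C δ n := hx'.resolve_right hxN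
          simp only [dif_neg hxN, dif_pos hyN]
          have hxW : x < W y hyN := lt_trans hxy (hW y hyN).2.2.1
          have hf' : f x < f (W y hyN) := hf1 hxC (hWCn y hyN) hxW
          have hpos1 : (0 : Ordinal) < H (W y hyN) y + 1 :=
            lt_of_lt_of_le zero_lt_one (le_add_self)
          calc lam.ord * f x + lam.ord ≤ lam.ord * f (W y hyN) := step1 hf'
            _ = lam.ord * f (W y hyN) + 0 := (add_zero _).symm
            _ < lam.ord * f (W y hyN) + (H (W y hyN) y + 1) := add_lt_add_right hpos1 _
            _ = lam.ord * f (W y hyN) + H (W y hyN) y + 1 := by rw [add_assoc]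
        · have hxC : x ∈ C δ n := hx'.resolve_right hxN
          have hyC : y ∈ C δ n := hy'.resolve_right hyN
          simp only [dif_neg hxN, dif_neg hyN]
          calc lam.ord * f x + lam.ord ≤ lam.ord * f y := step1 (hf1 hxC hyC hxy)
            _ = lam.ord * f y + 0 := (add_zero _).symm
            _ < lam.ord * f y + lam.ord := add_lt_add_right hΛpos _
      · -- bound
        intro x hx'
        have hpow : lam.ord * (lam.ord ^ ((n : Ordinal) + 1))
            = lam.ord ^ (((n + 1 : ℕ) : Ordinal) + 1) := by
          rw [← Ordinal.opow_one_add]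
          congr 1
          push_cast
          rw [← add_assoc, Ordinal.one_add_natCast, Order.succ_eq_add_one]
          push_cast
          rfl
        have hLlim : Order.IsSuccLimit (lam.ord ^ ((n : Ordinal) + 1)) := by
          rw [Ordinal.add_one_eq_succ, Ordinal.opow_succ]
          exact Ordinal.isSuccLimit_mul_right (Ordinal.opow_pos _ hΛpos) hΛlim
        have hkey : ∀ a : Ordinal, a < lam.ord ^ ((n : Ordinal) + 1) →
            lam.ord * a + lam.ord < lam.ord ^ (((n + 1 : ℕ) : Ordinal) + 1) := by
          intro a ha
          rw [← hpow, ← Ordinal.mul_succ]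
          exact mul_lt_mul_of_pos_left (hLlim.succ_lt ha) hΛpos
        rw [hCs] at hx'
        by_cases hxN : x ∈ New
        · simp only [dif_pos hxN]
          calc lam.ord * f (W x hxN) + H (W x hxN) x + 1
              < lam.ord * f (W x hxN) + lam.ord := by
                rw [add_assoc]; exact add_lt_add_right (step2 x hxN) _
            _ < _ := hkey _ (hf2 _ (hWCn x hxN))
        · simp only [dif_neg hxN]
          exact hkey _ (hf2 x (hx'.resolve_right hxN))
  intro n
  obtain ⟨hclub, f, hf1, hf2⟩ := key n
  exact ⟨hclub, (otp_le_iff (small_subset hclub.1)).2 ⟨f, hf1, hf2⟩⟩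
end
end

section
/- Let λ be a regular uncountable cardinal and ⟨c_α : α < λ⁺⟩ a sequence such that for each limit ordinal α < λ⁺, c_α is a club of α with otp(c_α) ≤ λ, and c_{γ+1} = {γ} for each γ. For each limit ordinal δ < λ⁺ define C_δ^0 = c_δ and C_δ^{n+1} = C_δ^n ∪ {α : there exists β ∈ nacc(C_δ^n) with sup(β ∩ C_δ^n) < α < β and α ∈ c_β}. If δ < λ⁺ is a limit ordinal, γ ≤ λ is a limit ordinal, and otp(c_δ) ≤ γ, then for every n < ω we have otp(C_δ^n) ≤ λ^n · γ (ordinal exponentiation and multiplication, γ copies of λ^n). -/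
noncomputable section

namespace OtpAux
def srel (C : Set Ordinal.{0}) [Small.{0} C] : Shrink C → Shrink C → Prop :=
  fun x y => ((equivShrink C).symm x : Ordinal) < ((equivShrink C).symm y : Ordinal)

noncomputable def srelEmb (C : Set Ordinal.{0}) [Small.{0} C] :
    srel C ↪r ((· < ·) : Ordinal → Ordinal → Prop) :=
  ⟨⟨fun x => ((equivShrink C).symm x : Ordinal),
      fun a b hab => (equivShrink C).symm.injective (Subtype.coe_injective hab)⟩, Iff.rfl⟩

instance (C : Set Ordinal.{0}) [Small.{0} C] : IsWellOrder (Shrink C) (srel C) :=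
  RelEmbedding.isWellOrder (srelEmb C)

theorem otp_eq (C : Set Ordinal.{0}) (h : Small.{0} C) :
    otp C = @Ordinal.type (Shrink C) (srel C) inferInstance := by
  haveI := h
  rw [otp, dif_pos h]
  rfl



/-- If `f` is strictly monotone on `C` with values `< b`, then `otp C ≤ b`. -/
theorem otp_le_of_forall (C : Set Ordinal.{0}) (hC : Small.{0} C) (b : Ordinal.{0})
    (f : Ordinal → Ordinal)
    (hmono : ∀ a ∈ C, ∀ a' ∈ C, a < a' → f a < f a')
    (hlt : ∀ a ∈ C, f a < b) : otp C ≤ b := by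
  haveI := hC
  rw [otp_eq C hC, ← Ordinal.type_toType b]
  have hinj : ∀ a ∈ C, ∀ a' ∈ C, f a = f a' → a = a' := by
    intro a ha a' ha' h
    rcases lt_trichotomy a a' with h1 | h1 | h1
    · exact absurd h (hmono a ha a' ha' h1).ne
    · exact h1
    · exact absurd h.symm (hmono a' ha' a ha h1).ne
  haveI : IsWellOrder b.ToType (· < ·) := isWellOrder_lt
  refine RelEmbedding.ordinal_type_le (r := srel C)
      (s := ((· < ·) : b.ToType → b.ToType → Prop))
    ⟨⟨fun z => Ordinal.ToType.mk (o := b) ⟨f ((equivShrink C).symm z : Ordinal),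
        hlt _ ((equivShrink C).symm z).2⟩, ?_⟩, ?_⟩
  · intro z w h
    have h2 := Subtype.mk_eq_mk.1 ((Ordinal.ToType.mk (o := b)).injective h)
    exact (equivShrink C).symm.injective (Subtype.ext
      (hinj _ ((equivShrink C).symm z).2 _ ((equivShrink C).symm w).2 h2))
  · intro z w
    show (Ordinal.ToType.mk (o := b) _ < Ordinal.ToType.mk (o := b) _) ↔ srel C z w
    rw [OrderIso.lt_iff_lt]
    change f ((equivShrink C).symm z : Ordinal) < f ((equivShrink C).symm w : Ordinal) ↔ srel C z w
    constructor
    · intro h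
      rcases lt_trichotomy ((equivShrink C).symm z : Ordinal)
        ((equivShrink C).symm w : Ordinal) with h1 | h1 | h1
      · exact h1
      · rw [h1] at h; exact absurd h (lt_irrefl _)
      · exact absurd (hmono _ ((equivShrink C).symm w).2 _ ((equivShrink C).symm z).2 h1)
          (asymm h)
    · exact hmono _ ((equivShrink C).symm z).2 _ ((equivShrink C).symm w).2



theorem otp_lt_of_mem {C : Set Ordinal.{0}} (hC : Small.{0} C) {a : Ordinal.{0}} (ha : a ∈ C) :
    otp (C ∩ Set.Iio a) < otp C := by
  haveI := hC
  haveI hC2 : Small.{0} (C ∩ Set.Iio a : Set Ordinal) := small_subset Set.inter_subset_left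
  rw [otp_eq _ hC2, otp_eq _ hC]
  refine PrincipalSeg.ordinal_type_lt (r := srel (C ∩ Set.Iio a : Set Ordinal)) (s := srel C)
    ⟨⟨⟨fun z => equivShrink C
        ⟨((equivShrink (C ∩ Set.Iio a : Set Ordinal)).symm z : Ordinal),
          ((equivShrink (C ∩ Set.Iio a : Set Ordinal)).symm z).2.1⟩, ?_⟩, ?_⟩,
      equivShrink C ⟨a, ha⟩, ?_⟩
  · intro z w h
    have h2 := Subtype.mk_eq_mk.1 ((equivShrink C).injective h)
    exact (equivShrink _).symm.injective (Subtype.ext h2)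
  · intro z w
    show srel C _ _ ↔ _
    exact iff_of_eq (congrArg₂ (· < ·)
      (congrArg Subtype.val ((equivShrink C).symm_apply_apply _))
      (congrArg Subtype.val ((equivShrink C).symm_apply_apply _)))
  · intro w
    simp only [srel, Set.mem_range, Function.Embedding.coeFn_mk, RelEmbedding.coe_mk,
      Equiv.symm_apply_apply]
    constructor
    · rintro ⟨z, rfl⟩
      exact lt_of_eq_of_lt (congrArg Subtype.val ((equivShrink C).symm_apply_apply _))
        ((equivShrink (C ∩ Set.Iio a : Set Ordinal)).symm z).2.2
    · intro hw
      refine ⟨equivShrink (C ∩ Set.Iio a : Set Ordinal)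
        ⟨((equivShrink C).symm w : Ordinal), ((equivShrink C).symm w).2, hw⟩, ?_⟩
      apply (equivShrink C).symm.injective
      apply Subtype.ext
      show ((equivShrink C).symm (equivShrink C ⟨_, _⟩) : Ordinal) = _
      rw [Equiv.symm_apply_apply]
      show ((equivShrink (C ∩ Set.Iio a : Set Ordinal)).symm
        (equivShrink (C ∩ Set.Iio a : Set Ordinal) ⟨_, _⟩) : Ordinal) = _
      rw [Equiv.symm_apply_apply]



theorem two_mul_limit {x : Ordinal.{0}} (hx : Order.IsSuccLimit x) : 2 * x = x := by
  obtain ⟨-, q, rfl⟩ := Ordinal.isSuccLimit_iff_omega0_dvd.1 hx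
  rw [← mul_assoc, Ordinal.mul_omega0 (by norm_num) (by exact_mod_cast Ordinal.nat_lt_omega0 2)]


end OtpAux

open OtpAux

/-- Refined order-type bound: if otp(c_δ) ≤ γ with γ ≤ λ limit, then otp(C_δ^n) ≤ λ^n·γ. -/
theorem stmt_7
    (lam : Cardinal.{0}) (hlamreg : lam.IsRegular) (hlamunc : Cardinal.aleph0 < lam)
    (c : Ordinal → Set Ordinal)
    (hc : ∀ α < (Order.succ lam).ord, Order.IsSuccLimit α →
      IsClubIn (c α) α ∧ otp (c α) ≤ lam.ord)
    (hcsucc : ∀ γ : Ordinal, c (γ + 1) = {γ})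
    (C : Ordinal → ℕ → Set Ordinal)
    (hC0 : ∀ δ, C δ 0 = c δ)
    (hCsucc : ∀ δ n, C δ (n + 1) = C δ n ∪
      {α | ∃ β ∈ naccSet (C δ n), sSup (C δ n ∩ Set.Iio β) < α ∧ α < β ∧ α ∈ c β})
    :
    ∀ δ < (Order.succ lam).ord, Order.IsSuccLimit δ →
      ∀ γ : Ordinal, Order.IsSuccLimit γ → γ ≤ lam.ord → otp (c δ) ≤ γ →
        ∀ n : ℕ, otp (C δ n) ≤ lam.ord ^ (n : Ordinal) * γ := by
  classical
  intro δ hδ hδlim γ hγlim hγle hotp n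
  have hμpos : (0 : Ordinal) < lam.ord := by
    have := Cardinal.isSuccLimit_ord hlamreg.aleph0_le
    exact this.pos
  have hμlim : Order.IsSuccLimit lam.ord := Cardinal.isSuccLimit_ord hlamreg.aleph0_le
  have hsub : ∀ m, C δ m ⊆ Set.Iio δ := by
    intro m
    induction m with
    | zero => rw [hC0]; exact (hc δ hδ hδlim).1.1
    | succ m ihm =>
      rw [hCsucc]
      rintro α (hα | ⟨β, hβ, _, hαβ, _⟩)
      · exact ihm hα
      · exact lt_trans hαβ (ihm hβ.1)
  -- block helper: c β is small with order type ≤ lam.ord for relevant β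
  have hblock : ∀ β : Ordinal, 0 < β → β < (Order.succ lam).ord →
      Small.{0} (c β) ∧ otp (c β) ≤ lam.ord := by
    intro β hβ0 hβ
    rcases Ordinal.zero_or_succ_or_isSuccLimit β with rfl | ⟨g, rfl⟩ | hlim
    · exact absurd hβ0 (lt_irrefl _)
    · rw [← Ordinal.add_one_eq_succ, hcsucc g]
      have hsm : Small.{0} (({g} : Set Ordinal)) := by
        haveI := (Set.finite_singleton g).to_subtype
        infer_instance
      refine ⟨hsm, otp_le_of_forall _ hsm _ (fun _ => 0) ?_ ?_⟩
      · intro a ha a' ha' haa'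
        rw [Set.mem_singleton_iff] at ha ha'
        rw [ha, ha'] at haa'
        exact absurd haa' (lt_irrefl _)
      · intro a _
        exact hμpos
    · obtain ⟨hclub, hotpβ⟩ := hc β hβ hlim
      exact ⟨small_subset hclub.1, hotpβ⟩
  induction n with
  | zero =>
    rw [hC0 δ]
    simpa using hotp
  | succ n ih =>
    set μ := lam.ord with hμdef
    set D := C δ n with hDdef
    have hDsmall : Small.{0} (D : Set Ordinal) := small_subset (hsub n)
    set x := μ ^ (n : Ordinal) * γ with hxdef
    have hxlim : Order.IsSuccLimit x := Ordinal.isSuccLimit_mul_right (Ordinal.opow_pos _ hμpos) hγlim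
    set P : Ordinal → Prop :=
      fun α => ∃ β ∈ naccSet D, sSup (D ∩ Set.Iio β) < α ∧ α < β ∧ α ∈ c β with hPdef
    set bof : Ordinal → Ordinal :=
      fun α => if α ∈ D then α else if h : P α then h.choose else 0 with hbofdef
    set rof : Ordinal → Ordinal :=
      fun α => if α ∈ D then μ else if h : P α then otp (c h.choose ∩ Set.Iio α) else 0
      with hrofdef
    set E : Ordinal → Ordinal := fun b => otp (D ∩ Set.Iio b) with hEdef
    set F : Ordinal → Ordinal := fun α => (μ + 1) * E (bof α) + rof α with hFdef
    have hD' : C δ (n + 1) = D ∪ {α | P α} := hCsucc δ n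
    -- basic computation lemmas
    have hbofD : ∀ α, α ∈ D → bof α = α ∧ rof α = μ := by
      intro α hα
      constructor
      · rw [hbofdef]; simp only [if_pos hα]
      · rw [hrofdef]; simp only [if_pos hα]
    have hspec : ∀ α, α ∉ D → P α →
        bof α ∈ naccSet D ∧ sSup (D ∩ Set.Iio (bof α)) < α ∧ α < bof α ∧ α ∈ c (bof α) ∧
          rof α = otp (c (bof α) ∩ Set.Iio α) := by
      intro α hα hP
      have hb : bof α = hP.choose := by
        rw [hbofdef]; simp only [if_neg hα, dif_pos hP]
      have hr : rof α = otp (c hP.choose ∩ Set.Iio α) := by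
        rw [hrofdef]; simp only [if_neg hα, dif_pos hP]
      obtain ⟨h1, h2, h3, h4⟩ := hP.choose_spec
      rw [hb, hr]
      exact ⟨h1, h2, h3, h4, rfl⟩
    have hbofmem : ∀ α, α ∈ D ∨ P α → bof α ∈ D := by
      intro α hα
      by_cases hαD : α ∈ D
      · rw [(hbofD α hαD).1]; exact hαD
      · exact ((hspec α hαD (hα.resolve_left hαD)).1).1
    have hle : ∀ α, α ∈ D ∨ P α → α ≤ bof α := by
      intro α hα
      by_cases hαD : α ∈ D
      · rw [(hbofD α hαD).1]
      · exact le_of_lt (hspec α hαD (hα.resolve_left hαD)).2.2.1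
    have hdlt : ∀ α, α ∈ D ∨ P α → ∀ d ∈ D, d < bof α → d < α := by
      intro α hα d hd hdb
      by_cases hαD : α ∈ D
      · rw [(hbofD α hαD).1] at hdb; exact hdb
      · obtain ⟨_, h2, _, _, _⟩ := hspec α hαD (hα.resolve_left hαD)
        refine lt_of_le_of_lt ?_ h2
        refine le_csSup ⟨bof α, ?_⟩ ⟨hd, hdb⟩
        rintro z ⟨_, hz⟩
        exact le_of_lt hz
    have hbofsucc : ∀ α, α ∉ D → P α → 0 < bof α ∧ bof α < (Order.succ lam).ord := by
      intro α hα hP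
      obtain ⟨h1, _, h3, _, _⟩ := hspec α hα hP
      exact ⟨lt_of_le_of_lt zero_le h3,
        lt_trans (hsub n h1.1) hδ⟩
    have hrle : ∀ α, α ∈ D ∨ P α → rof α ≤ μ := by
      intro α hα
      by_cases hαD : α ∈ D
      · rw [(hbofD α hαD).2]
      · have hP := hα.resolve_left hαD
        obtain ⟨_, _, _, h4, h5⟩ := hspec α hαD hP
        obtain ⟨hb0, hbs⟩ := hbofsucc α hαD hP
        obtain ⟨hsm, hβμ⟩ := hblock _ hb0 hbs
        rw [h5]
        exact le_of_lt (lt_of_lt_of_le (otp_lt_of_mem hsm h4) hβμ)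
    have hrlt : ∀ α, α ∉ D → P α → rof α < μ := by
      intro α hαD hP
      obtain ⟨_, _, _, h4, h5⟩ := hspec α hαD hP
      obtain ⟨hb0, hbs⟩ := hbofsucc α hαD hP
      obtain ⟨hsm, hβμ⟩ := hblock _ hb0 hbs
      rw [h5]
      exact lt_of_lt_of_le (otp_lt_of_mem hsm h4) hβμ
    have hrmono : ∀ α α', α ∉ D → P α → α' ∉ D → P α' → α < α' → bof α = bof α' →
        rof α < rof α' := by
      intro α α' hαD hPα hα'D hPα' hlt hbeq
      obtain ⟨_, _, _, h4, h5⟩ := hspec α hαD hPα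
      obtain ⟨_, _, _, h4', h5'⟩ := hspec α' hα'D hPα'
      obtain ⟨hb0, hbs⟩ := hbofsucc α' hα'D hPα'
      obtain ⟨hsm, _⟩ := hblock _ hb0 hbs
      rw [h5, h5', hbeq]
      have hsm2 : Small.{0} (c (bof α') ∩ Set.Iio α' : Set Ordinal) :=
        small_subset Set.inter_subset_left
      have hmem : α ∈ c (bof α') ∩ Set.Iio α' := ⟨hbeq ▸ h4, hlt⟩
      have := otp_lt_of_mem hsm2 hmem
      have hseteq : (c (bof α') ∩ Set.Iio α') ∩ Set.Iio α = c (bof α') ∩ Set.Iio α := by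
        ext z
        constructor
        · rintro ⟨⟨hz, _⟩, hz2⟩; exact ⟨hz, hz2⟩
        · rintro ⟨hz, hz2⟩; exact ⟨⟨hz, lt_trans hz2 hlt⟩, hz2⟩
      rwa [hseteq] at this
    have hEmono : ∀ b ∈ D, ∀ b', b < b' → E b < E b' := by
      intro b hb b' hbb'
      have hsm : Small.{0} (D ∩ Set.Iio b' : Set Ordinal) := small_subset Set.inter_subset_left
      have := otp_lt_of_mem hsm (⟨hb, hbb'⟩ : b ∈ D ∩ Set.Iio b')
      have hseteq : (D ∩ Set.Iio b') ∩ Set.Iio b = D ∩ Set.Iio b := by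
        ext z
        constructor
        · rintro ⟨⟨hz, _⟩, hz2⟩; exact ⟨hz, hz2⟩
        · rintro ⟨hz, hz2⟩; exact ⟨⟨hz, lt_trans hz2 hbb'⟩, hz2⟩
      rw [hseteq] at this
      exact this
    have hElt : ∀ b ∈ D, E b < x := by
      intro b hb
      exact lt_of_lt_of_le (otp_lt_of_mem hDsmall hb) ih
    -- strict monotonicity of F
    have hFmono : ∀ α, α ∈ D ∨ P α → ∀ α', α' ∈ D ∨ P α' → α < α' → F α < F α' := by
      intro α hα α' hα' hlt
      have hbb : bof α ≤ bof α' := by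
        by_contra hcon
        push_neg at hcon
        have h1 : bof α' < α := hdlt α hα _ (hbofmem α' hα') hcon
        exact absurd (h1.trans (hlt.trans_le (hle α' hα'))) (lt_irrefl _)
      have hFα : F α = (μ + 1) * E (bof α) + rof α := rfl
      have hFα' : F α' = (μ + 1) * E (bof α') + rof α' := rfl
      rcases lt_or_eq_of_le hbb with hbb | hbb
      · rw [hFα, hFα']
        have h1 : (μ + 1) * E (bof α) + rof α ≤ (μ + 1) * E (bof α) + μ :=
          add_le_add_right (hrle α hα) _
        have h2 : (μ + 1) * E (bof α) + μ < (μ + 1) * E (bof α) + (μ + 1) :=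
          add_lt_add_right (lt_add_one μ) _
        have h3 : (μ + 1) * E (bof α) + (μ + 1) = (μ + 1) * (E (bof α) + 1) := by
          rw [mul_add, mul_one]
        have h4 : (μ + 1) * (E (bof α) + 1) ≤ (μ + 1) * E (bof α') := by
          apply mul_le_mul_right
          rw [Order.add_one_le_iff]
          exact hEmono _ (hbofmem α hα) _ hbb
        have h5 : (μ + 1) * E (bof α') ≤ (μ + 1) * E (bof α') + rof α' :=
          le_self_add
        exact lt_of_le_of_lt h1 (lt_of_lt_of_le h2 (h3 ▸ le_trans h4 h5))
      · by_cases hαD : α ∈ D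
        · have hba : bof α = α := (hbofD α hαD).1
          have h1 : α' ≤ bof α' := hle α' hα'
          rw [← hbb, hba] at h1
          exact absurd (hlt.trans_le h1) (lt_irrefl _)
        · have hPα : P α := hα.resolve_left hαD
          by_cases hα'D : α' ∈ D
          · rw [hFα, hFα', hbb, (hbofD α' hα'D).2]
            exact add_lt_add_right (hrlt α hαD hPα) _
          · have hPα' : P α' := hα'.resolve_left hα'D
            rw [hFα, hFα', hbb]
            exact add_lt_add_right (hrmono α α' hαD hPα hα'D hPα' hlt hbb) _
    -- bound on F
    have hFlt : ∀ α, α ∈ D ∨ P α → F α < (μ + 1) * x := by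
      intro α hα
      have h1 : F α ≤ (μ + 1) * E (bof α) + μ := add_le_add_right (hrle α hα) _
      have h2 : (μ + 1) * E (bof α) + μ < (μ + 1) * E (bof α) + (μ + 1) :=
        add_lt_add_right (lt_add_one μ) _
      have h3 : (μ + 1) * E (bof α) + (μ + 1) = (μ + 1) * (E (bof α) + 1) := by
        rw [mul_add, mul_one]
      have h4 : (μ + 1) * (E (bof α) + 1) ≤ (μ + 1) * x := by
        apply mul_le_mul_right
        rw [Order.add_one_le_iff]
        exact hElt _ (hbofmem α hα)
      exact lt_of_le_of_lt h1 (lt_of_lt_of_le h2 (h3 ▸ h4))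
    have hsmall' : Small.{0} (C δ (n + 1) : Set Ordinal) := small_subset (hsub (n + 1))
    have hmain : otp (C δ (n + 1)) ≤ (μ + 1) * x := by
      refine otp_le_of_forall _ hsmall' _ F ?_ ?_
      · intro a ha a' ha' h
        rw [hD'] at ha ha'
        exact hFmono a ha a' ha' h
      · intro a ha
        rw [hD'] at ha
        exact hFlt a ha
    refine le_trans hmain ?_
    -- arithmetic: (μ+1) * x ≤ μ^(n+1) * γ
    have h1 : μ + 1 ≤ μ * 2 := by
      have h2 : μ * 2 = μ + μ := by
        rw [(by norm_num : (2 : Ordinal) = 1 + 1), mul_add, mul_one]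
      rw [h2]
      exact add_le_add_right (Order.one_le_iff_pos.2 hμpos) μ
    calc (μ + 1) * x ≤ (μ * 2) * x := mul_le_mul_left h1 x
      _ = μ * (2 * x) := mul_assoc _ _ _
      _ = μ * x := by rw [two_mul_limit hxlim]
      _ = μ ^ ((n + 1 : ℕ) : Ordinal) * γ := by
          rw [hxdef, ← mul_assoc]
          congr 1
          have hcast : ((n + 1 : ℕ) : Ordinal) = (1 : Ordinal) + (n : Ordinal) := by
            norm_cast
            omega
          rw [hcast, Ordinal.opow_add, Ordinal.opow_one]
end
end

section
/- Let λ be a regular uncountable cardinal and ⟨c_α : α < λ⁺⟩ a sequence such that for each limit ordinal α < λ⁺, c_α is a club of α with otp(c_α) ≤ λ, and c_{γ+1} = {γ} for each γ. For each limit ordinal δ < λ⁺ define C_δ^0 = c_δ and C_δ^{n+1} = C_δ^n ∪ {α : there exists β ∈ nacc(C_δ^n) with sup(β ∩ C_δ^n) < α < β and α ∈ c_β}. Then for every limit ordinal δ < λ⁺ and every α < δ with cf(α) = λ, there exists n < ω such that α ∈ nacc(C_δ^n); equivalently, S_λ^δ = ⋃_{n<ω} (nacc(C_δ^n) ∩ S_λ^δ).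 -/
noncomputable section

namespace StmtAux

def srel (S : Set Ordinal.{0}) [Small.{0} S] : Shrink S → Shrink S → Prop :=
  fun x y => ((equivShrink S).symm x : Ordinal) < ((equivShrink S).symm y : Ordinal)

instance iswo (S : Set Ordinal.{0}) [Small.{0} S] : IsWellOrder (Shrink S) (srel S) :=
  RelEmbedding.isWellOrder
    (⟨⟨fun x => ((equivShrink S).symm x : Ordinal),
        fun a b hab => (equivShrink S).symm.injective (Subtype.coe_injective hab)⟩,
      Iff.rfl⟩ :
      (srel S) ↪r ((· < ·) : Ordinal → Ordinal → Prop))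

lemma otp_eq (S : Set Ordinal.{0}) [inst : Small.{0} S] : otp S = Ordinal.type (srel S) := by
  unfold otp
  rw [dif_pos inst]
  rfl

lemma otp_inter_Iio_lt {D : Set Ordinal.{0}} [Small.{0} D] {α : Ordinal} (hα : α ∈ D) :
    otp (D ∩ Set.Iio α) < otp D := by
  haveI : Small.{0} (D ∩ Set.Iio α : Set Ordinal) := small_subset Set.inter_subset_left
  rw [otp_eq, otp_eq]
  set S : Set Ordinal.{0} := D ∩ Set.Iio α with hS
  let f : Shrink S → Shrink D := fun x =>
    equivShrink D ⟨((equivShrink S).symm x : Ordinal), ((equivShrink S).symm x).2.1⟩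
  have hfval : ∀ x, (((equivShrink D).symm (f x)) : Ordinal)
      = ((equivShrink S).symm x : Ordinal) := by
    intro x
    show (((equivShrink D).symm (equivShrink D _)) : Ordinal) = _
    rw [Equiv.symm_apply_apply]
  have hinj : Function.Injective f := by
    intro a b hab
    have h1 : (((equivShrink D).symm (f a)) : Ordinal)
        = (((equivShrink D).symm (f b)) : Ordinal) := by rw [hab]
    rw [hfval, hfval] at h1
    exact (equivShrink S).symm.injective (Subtype.coe_injective h1)
  have htop : (((equivShrink D).symm (equivShrink D ⟨α, hα⟩)) : Ordinal) = α := by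
    rw [Equiv.symm_apply_apply]
  refine PrincipalSeg.ordinal_type_lt ⟨⟨⟨f, hinj⟩, ?_⟩, equivShrink D ⟨α, hα⟩, ?_⟩
  · intro a b
    show srel D (f a) (f b) ↔ srel S a b
    unfold srel
    rw [hfval, hfval]
  · intro b
    show (∃ a, f a = b) ↔ srel D b _
    unfold srel
    rw [htop]
    constructor
    · rintro ⟨a, rfl⟩
      rw [hfval]
      exact ((equivShrink S).symm a).2.2
    · intro h
      set z : ↥S := ⟨((equivShrink D).symm b : Ordinal),
        ⟨((equivShrink D).symm b).2, h⟩⟩ with hz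
      refine ⟨equivShrink S z, ?_⟩
      apply (equivShrink D).symm.injective
      apply Subtype.coe_injective
      show (((equivShrink D).symm (f (equivShrink S z))) : Ordinal)
          = (((equivShrink D).symm b) : Ordinal)
      rw [hfval, Equiv.symm_apply_apply]

lemma no_acc {lam : Cardinal.{0}} (hreg : lam.IsRegular) {D : Set Ordinal.{0}}
    (hsmall : Small.{0} D) {α : Ordinal.{0}}
    (hmem : α ∈ D) (hotp : otp D ≤ lam.ord) (hcof : α.cof = lam)
    (hsup : sSup (D ∩ Set.Iio α) = α) : False := by
  set S : Set Ordinal.{0} := D ∩ Set.Iio α with hS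
  haveI : Small.{0} S := small_subset Set.inter_subset_left
  have h1 : otp S < lam.ord := lt_of_lt_of_le (otp_inter_Iio_lt hmem) hotp
  have h2 : (otp S).card < lam := Cardinal.lt_ord.mp h1
  have h3 : Cardinal.mk (Shrink S) = (otp S).card := by
    rw [otp_eq]; exact (Ordinal.card_type (srel S)).symm
  set f : Shrink S → Ordinal := fun x => ((equivShrink S).symm x : Ordinal) with hf
  have h4 : ∀ i, f i < α := fun i => ((equivShrink S).symm i).2.2
  have h5 : iSup f < α := by
    refine Ordinal.iSup_lt_ord ?_ h4
    rw [h3, hcof]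
    exact h2
  have h6 : α ≤ iSup f := by
    rw [← hsup]
    refine csSup_le' ?_
    intro x hx
    have h7 := le_ciSup (Ordinal.bddAbove_range f) (equivShrink S ⟨x, hx⟩)
    simpa only [hf, Equiv.symm_apply_apply] using h7
  exact absurd h6 (not_le.mpr h5)



lemma hbddn (E : Set Ordinal.{0}) (β : Ordinal.{0}) : BddAbove (E ∩ Set.Iio β) :=
  ⟨β, fun _ hx => le_of_lt hx.2⟩

lemma exists_gt {s : Set Ordinal.{0}} {ζ : Ordinal} (h : ζ < sSup s) : ∃ x ∈ s, ζ < x := by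
  by_contra hc
  push_neg at hc
  exact absurd (csSup_le' hc) (not_le.mpr h)

lemma sSup_inter_Iio_le (E : Set Ordinal.{0}) (β : Ordinal.{0}) :
    sSup (E ∩ Set.Iio β) ≤ β :=
  csSup_le' (fun _ hx => le_of_lt hx.2)

lemma nonempty_of_sSup_pos {s : Set Ordinal.{0}} (h : 0 < sSup s) : s.Nonempty := by
  rcases Set.eq_empty_or_nonempty s with he | he
  · rw [he, csSup_empty] at h
    exact absurd h (lt_irrefl _)
  · exact he

lemma csucc_eq {c : Ordinal → Set Ordinal} (hcsucc : ∀ γ : Ordinal, c (γ + 1) = {γ})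
    {β γ : Ordinal} (h : β = Order.succ γ) : c β = {γ} := by
  rw [h, ← Ordinal.add_one_eq_succ]
  exact hcsucc γ

end StmtAux

open StmtAux in
/-- Note 1.6(3): every point of cofinality λ below δ is a nonaccumulation point of some C_δ^n. -/
theorem stmt_9
    (lam : Cardinal.{0}) (hlamreg : lam.IsRegular) (hlamunc : Cardinal.aleph0 < lam)
    (c : Ordinal → Set Ordinal)
    (hc : ∀ α < (Order.succ lam).ord, Order.IsSuccLimit α →
      IsClubIn (c α) α ∧ otp (c α) ≤ lam.ord)
    (hcsucc : ∀ γ : Ordinal, c (γ + 1) = {γ})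
    (C : Ordinal → ℕ → Set Ordinal)
    (hC0 : ∀ δ, C δ 0 = c δ)
    (hCsucc : ∀ δ n, C δ (n + 1) = C δ n ∪
      {α | ∃ β ∈ naccSet (C δ n), sSup (C δ n ∩ Set.Iio β) < α ∧ α < β ∧ α ∈ c β})
    :
    ∀ δ < (Order.succ lam).ord, Order.IsSuccLimit δ →
      (∀ α < δ, α.cof = lam → ∃ n : ℕ, α ∈ naccSet (C δ n)) ∧
      cofSet lam δ = ⋃ n : ℕ, naccSet (C δ n) ∩ cofSet lam δ := by
  intro δ hδ hδlim
  have hsubn : ∀ n, C δ n ⊆ C δ (n + 1) := fun n => by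
    rw [hCsucc]; exact Set.subset_union_left
  -- every C δ n is a club in δ
  have hclub : ∀ n, IsClubIn (C δ n) δ := by
    intro n
    induction n with
    | zero => rw [hC0]; exact (hc δ hδ hδlim).1
    | succ n ih =>
      obtain ⟨ihsub, ihunb, ihcl⟩ := ih
      have hsub1 : C δ (n + 1) ⊆ Set.Iio δ := by
        intro x hx
        rw [hCsucc] at hx
        rcases hx with hx | ⟨β, hβ, _, hxβ, _⟩
        · exact ihsub hx
        · exact lt_trans hxβ (ihsub hβ.1)
      refine ⟨hsub1, ?_, ?_⟩
      · intro β hβ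
        obtain ⟨γ, hγ, hγ'⟩ := ihunb β hβ
        exact ⟨γ, hsubn n hγ, hγ'⟩
      · intro s hs hsne hslt
        set σ := sSup s with hσdef
        by_cases hmem : σ ∈ s
        · exact hs hmem
        have hbdds : BddAbove s := ⟨δ, fun x hx => le_of_lt (hsub1 (hs hx))⟩
        have hlt : ∀ x ∈ s, x < σ := fun x hx =>
          lt_of_le_of_ne (le_csSup hbdds hx) (fun h => hmem (h ▸ hx))
        have hσpos : 0 < σ := by
          obtain ⟨x, hx⟩ := hsne
          exact lt_of_le_of_lt (zero_le (a := x)) (hlt x hx)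
        have hcofσ : ∀ ζ < σ, ∃ x ∈ s, ζ < x := fun ζ hζ => exists_gt hζ
        set σ' := sSup (C δ n ∩ Set.Iio σ) with hσ'def
        rcases eq_or_lt_of_le (sSup_inter_Iio_le (C δ n) σ) with hσ'eq | hσ'lt
        · -- σ' = σ, use closedness of C δ n
          have hne : (C δ n ∩ Set.Iio σ).Nonempty :=
            nonempty_of_sSup_pos (by rw [hσ'eq]; exact hσpos)
          have h1 := ihcl _ Set.inter_subset_left hne (by rw [hσ'eq]; exact hslt)
          rw [hσ'eq] at h1
          exact hsubn n h1
        · -- σ' < σ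
          obtain ⟨x₀, hx₀s, hx₀gt⟩ := hcofσ σ' hσ'lt
          have hx₀lt : x₀ < σ := hlt _ hx₀s
          have hx₀mem : x₀ ∈ C δ (n + 1) := hs hx₀s
          have hx₀notn : x₀ ∉ C δ n := fun h =>
            absurd (le_csSup (hbddn (C δ n) σ) ⟨h, hx₀lt⟩) (not_le.mpr hx₀gt)
          rw [hCsucc] at hx₀mem
          rcases hx₀mem with h | ⟨β₀, hβ₀nacc, hτ₀, hx₀β₀, hx₀c⟩
          · exact absurd h hx₀notn
          have hβ₀n : β₀ ∈ C δ n := hβ₀nacc.1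
          have hσβ₀ : σ ≤ β₀ := by
            by_contra h
            push_neg at h
            exact absurd (le_csSup (hbddn (C δ n) σ) ⟨hβ₀n, h⟩)
              (not_le.mpr (lt_trans hx₀gt hx₀β₀))
          rcases eq_or_lt_of_le hσβ₀ with hσβ | hσβ
          · exact hsubn n (hσβ ▸ hβ₀n)
          -- σ < β₀
          have hτ₀σ : sSup (C δ n ∩ Set.Iio β₀) < σ := lt_trans hτ₀ hx₀lt
          set ρ := max σ' (sSup (C δ n ∩ Set.Iio β₀)) with hρdef
          have hρσ : ρ < σ := max_lt hσ'lt hτ₀σ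
          have hρx₀ : ρ < x₀ := max_lt hx₀gt hτ₀
          have hkey : ∀ x ∈ s, ρ < x → x ∈ c β₀ ∧ x < β₀ := by
            intro x hxs hρx
            have hxσ : x < σ := hlt x hxs
            have hxnot : x ∉ C δ n := fun h =>
              absurd (le_csSup (hbddn (C δ n) σ) ⟨h, hxσ⟩)
                (not_le.mpr (lt_of_le_of_lt (le_max_left _ _) hρx))
            have hxmem := hs hxs
            rw [hCsucc] at hxmem
            rcases hxmem with h | ⟨β₁, hβ₁nacc, hτ₁, hxβ₁, hxc⟩
            · exact absurd h hxnot
            rcases lt_trichotomy β₁ β₀ with h | h | h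
            · have h1 : β₁ ≤ sSup (C δ n ∩ Set.Iio β₀) :=
                le_csSup (hbddn (C δ n) β₀) ⟨hβ₁nacc.1, h⟩
              exact absurd hxβ₁ (not_lt.mpr
                (le_trans h1 (le_trans (le_max_right _ _) (le_of_lt hρx))))
            · exact ⟨h ▸ hxc, h ▸ hxβ₁⟩
            · have h1 : β₀ ≤ sSup (C δ n ∩ Set.Iio β₁) :=
                le_csSup (hbddn (C δ n) β₁) ⟨hβ₀n, h⟩
              exact absurd (lt_trans (lt_of_le_of_lt h1 hτ₁) hxσ)
                (not_lt.mpr (le_of_lt hσβ))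
          have hβ₀lim : Order.IsSuccLimit β₀ := by
            rcases Ordinal.zero_or_succ_or_isSuccLimit β₀ with h0 | ⟨γ, hγ⟩ | h
            · exact absurd h0 (ne_of_gt (lt_trans hσpos hσβ))
            · exfalso
              have hcb : c β₀ = {γ} := csucc_eq hcsucc hγ.symm
              obtain ⟨x₁, hx₁s, hx₁gt⟩ := hcofσ x₀ hx₀lt
              have hx₁c := (hkey x₁ hx₁s (lt_trans hρx₀ hx₁gt)).1
              rw [hcb] at hx₀c hx₁c
              rw [Set.mem_singleton_iff] at hx₀c hx₁c
              rw [hx₀c, hx₁c] at hx₁gt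
              exact absurd hx₁gt (lt_irrefl _)
            · exact h
          have hβ₀ord : β₀ < (Order.succ lam).ord := lt_trans (ihsub hβ₀n) hδ
          obtain ⟨⟨hcb_sub, hcb_unb, hcb_cl⟩, hcb_otp⟩ := hc β₀ hβ₀ord hβ₀lim
          have hs'ne : (c β₀ ∩ Set.Iio σ).Nonempty := ⟨x₀, hx₀c, hx₀lt⟩
          have hsup' : sSup (c β₀ ∩ Set.Iio σ) = σ := by
            refine le_antisymm (sSup_inter_Iio_le _ _) ?_
            by_contra h
            push_neg at h
            obtain ⟨x, hxs, hxgt⟩ := hcofσ (max (sSup (c β₀ ∩ Set.Iio σ)) ρ) (max_lt h hρσ)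
            obtain ⟨hxc, _⟩ := hkey x hxs (lt_of_le_of_lt (le_max_right _ _) hxgt)
            exact absurd (le_csSup (hbddn (c β₀) σ) ⟨hxc, hlt x hxs⟩)
              (not_le.mpr (lt_of_le_of_lt (le_max_left _ _) hxgt))
          have hσc : σ ∈ c β₀ := by
            have h1 := hcb_cl _ Set.inter_subset_left hs'ne (by rw [hsup']; exact hσβ)
            rwa [hsup'] at h1
          rw [hCsucc]
          exact Or.inr ⟨β₀, hβ₀nacc, hτ₀σ, hσβ, hσc⟩
  -- main statement, first half
  have hmain : ∀ α < δ, α.cof = lam → ∃ n : ℕ, α ∈ naccSet (C δ n) := by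
    intro α hαδ hαcof
    have hα0 : 0 < α := by
      by_contra h
      push_neg at h
      have hα : α = 0 := le_antisymm h (zero_le (a := α))
      rw [hα, Ordinal.cof_zero] at hαcof
      exact (ne_of_gt hlamreg.pos) hαcof.symm
    -- step B : α belongs to some C δ n
    have hexists : ∃ n, α ∈ C δ n := by
      by_contra hcon
      push_neg at hcon
      have hne : ∀ n : ℕ, (C δ n ∩ Set.Ici α).Nonempty := by
        intro n
        obtain ⟨γ, hγ, hγ'⟩ := (hclub n).2.1 α hαδ
        exact ⟨γ, hγ, hγ'⟩
      set f : ℕ → Ordinal := fun n => sInf (C δ n ∩ Set.Ici α) with hf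
      have hfmem : ∀ n, f n ∈ C δ n ∩ Set.Ici α := fun n => csInf_mem (hne n)
      have hfgt : ∀ n, α < f n := fun n =>
        lt_of_le_of_ne (hfmem n).2 (fun h => hcon n (h ▸ (hfmem n).1))
      have hdesc : ∀ n, f (n + 1) < f n := by
        intro n
        have hβmem : f n ∈ C δ n := (hfmem n).1
        have hβmin : ∀ x ∈ C δ n, α ≤ x → f n ≤ x := fun x hx hx' =>
          csInf_le (OrderBot.bddBelow _) ⟨hx, hx'⟩
        have hαβ : α < f n := hfgt n
        have hσα : sSup (C δ n ∩ Set.Iio (f n)) ≤ α := by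
          apply csSup_le'
          rintro x ⟨hx1, hx2⟩
          by_contra h
          push_neg at h
          exact absurd hx2 (not_lt.mpr (hβmin x hx1 (le_of_lt h)))
        have hσα' : sSup (C δ n ∩ Set.Iio (f n)) < α := by
          rcases eq_or_lt_of_le hσα with h | h
          · exfalso
            have hne' : (C δ n ∩ Set.Iio (f n)).Nonempty :=
              nonempty_of_sSup_pos (by rw [h]; exact hα0)
            have h1 := (hclub n).2.2 _ Set.inter_subset_left hne'
              (by rw [h]; exact hαδ)
            rw [h] at h1
            exact hcon n h1
          · exact h
        have hβnacc : f n ∈ naccSet (C δ n) := by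
          refine ⟨hβmem, fun hacc => ?_⟩
          exact (ne_of_gt (lt_trans hσα' hαβ)) hacc.2
        have hβδ : f n < δ := (hclub n).1 hβmem
        have hy : ∃ y ∈ c (f n), α ≤ y ∧ y < f n := by
          rcases Ordinal.zero_or_succ_or_isSuccLimit (f n) with h0 | ⟨γ, hγ⟩ | hlim
          · exact absurd h0 (ne_of_gt (lt_trans hα0 hαβ))
          · have hcb : c (f n) = {γ} := csucc_eq hcsucc hγ.symm
            refine ⟨γ, by rw [hcb]; rfl, ?_, ?_⟩
            · exact Order.lt_succ_iff.mp (hγ ▸ hαβ)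
            · rw [← hγ]; exact Order.lt_succ γ
          · obtain ⟨hclubβ, _⟩ := hc (f n) (lt_trans hβδ hδ) hlim
            obtain ⟨y, hy1, hy2⟩ := hclubβ.2.1 α hαβ
            exact ⟨y, hy1, hy2, hclubβ.1 hy1⟩
        obtain ⟨y, hyc, hyα, hyβ⟩ := hy
        have hymem : y ∈ C δ (n + 1) := by
          rw [hCsucc]
          exact Or.inr ⟨f n, hβnacc, lt_of_lt_of_le hσα' hyα, hyβ, hyc⟩
        exact lt_of_le_of_lt (csInf_le (OrderBot.bddBelow _) ⟨hymem, hyα⟩) hyβ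
      obtain ⟨a, ⟨m, rfl⟩, hmin⟩ := Ordinal.lt_wf.has_min (Set.range f) ⟨f 0, ⟨0, rfl⟩⟩
      exact hmin (f (m + 1)) ⟨m + 1, rfl⟩ (hdesc m)
    -- step C : the minimal such n works
    classical
    refine ⟨Nat.find hexists, Nat.find_spec hexists, fun hacc => ?_⟩
    have heq : sSup (C δ (Nat.find hexists) ∩ Set.Iio α) = α := hacc.2.symm
    cases hfind : Nat.find hexists with
    | zero =>
      rw [hfind, hC0] at heq
      have hαc : α ∈ c δ := by
        have h1 := hacc.1
        rwa [hfind, hC0] at h1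
      exact no_acc hlamreg (small_subset (hc δ hδ hδlim).1.1) hαc
        (hc δ hδ hδlim).2 hαcof heq
    | succ m =>
      rw [hfind] at heq
      have hαnotm : α ∉ C δ m := Nat.find_min hexists (hfind ▸ Nat.lt_succ_self m)
      have hαmem : α ∈ C δ (m + 1) := by
        have h1 := hacc.1
        rwa [hfind] at h1
      rw [hCsucc] at hαmem
      rcases hαmem with h | ⟨β', hβ'nacc, hτ', hαβ', hαc⟩
      · exact hαnotm h
      have hσmα : sSup (C δ m ∩ Set.Iio α) < α := by
        rcases eq_or_lt_of_le (sSup_inter_Iio_le (C δ m) α) with h | h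
        · exfalso
          have hne' : (C δ m ∩ Set.Iio α).Nonempty :=
            nonempty_of_sSup_pos (by rw [h]; exact hα0)
          have h1 := (hclub m).2.2 _ Set.inter_subset_left hne' (by rw [h]; exact hαδ)
          rw [h] at h1
          exact hαnotm h1
        · exact h
      set ρ := max (sSup (C δ m ∩ Set.Iio α)) (sSup (C δ m ∩ Set.Iio β')) with hρdef
      have hρα : ρ < α := max_lt hσmα hτ'
      have hkey : ∀ x, x ∈ C δ (m + 1) → x < α → ρ < x → x ∈ c β' := by
        intro x hxmem hxα hρx
        have hxnot : x ∉ C δ m := fun h =>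
          absurd (le_csSup (hbddn (C δ m) α) ⟨h, hxα⟩)
            (not_le.mpr (lt_of_le_of_lt (le_max_left _ _) hρx))
        rw [hCsucc] at hxmem
        rcases hxmem with h | ⟨β'', hβ''nacc, hτ'', hxβ'', hxc⟩
        · exact absurd h hxnot
        rcases lt_trichotomy β'' β' with h | h | h
        · have h1 : β'' ≤ sSup (C δ m ∩ Set.Iio β') :=
            le_csSup (hbddn (C δ m) β') ⟨hβ''nacc.1, h⟩
          exact absurd hxβ'' (not_lt.mpr
            (le_trans h1 (le_trans (le_max_right _ _) (le_of_lt hρx))))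
        · exact h ▸ hxc
        · have h1 : β' ≤ sSup (C δ m ∩ Set.Iio β'') :=
            le_csSup (hbddn (C δ m) β'') ⟨hβ'nacc.1, h⟩
          exact absurd (lt_trans (lt_of_le_of_lt h1 hτ'') hxα)
            (not_lt.mpr (le_of_lt hαβ'))
      have hβ'lim : Order.IsSuccLimit β' := by
        rcases Ordinal.zero_or_succ_or_isSuccLimit β' with h0 | ⟨γ', hγ'⟩ | h
        · exact absurd h0 (ne_of_gt (lt_trans hα0 hαβ'))
        · exfalso
          have hcb : c β' = {γ'} := csucc_eq hcsucc hγ'.symm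
          obtain ⟨x, hxs, hxgt⟩ := exists_gt (show ρ < sSup (C δ (m+1) ∩ Set.Iio α) by
            rw [heq]; exact hρα)
          have hxc := hkey x hxs.1 hxs.2 hxgt
          rw [hcb, Set.mem_singleton_iff] at hxc hαc
          have hlt2 : x < α := hxs.2
          rw [hxc, hαc] at hlt2
          exact absurd hlt2 (lt_irrefl _)
        · exact h
      have hsupc : sSup (c β' ∩ Set.Iio α) = α := by
        refine le_antisymm (sSup_inter_Iio_le _ _) ?_
        by_contra h
        push_neg at h
        obtain ⟨x, hxs, hxgt⟩ := exists_gt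
          (show max (sSup (c β' ∩ Set.Iio α)) ρ < sSup (C δ (m+1) ∩ Set.Iio α) by
            rw [heq]; exact max_lt h hρα)
        have hxc := hkey x hxs.1 hxs.2 (lt_of_le_of_lt (le_max_right _ _) hxgt)
        exact absurd (le_csSup (hbddn (c β') α) ⟨hxc, hxs.2⟩)
          (not_le.mpr (lt_of_le_of_lt (le_max_left _ _) hxgt))
      have hβ'ord : β' < (Order.succ lam).ord :=
        lt_trans ((hclub m).1 hβ'nacc.1) hδ
      exact no_acc hlamreg (small_subset (hc β' hβ'ord hβ'lim).1.1) hαc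
        (hc β' hβ'ord hβ'lim).2 hαcof hsupc
  refine ⟨hmain, ?_⟩
  ext α
  simp only [Set.mem_iUnion, Set.mem_inter_iff]
  constructor
  · intro hα
    obtain ⟨n, hn⟩ := hmain α hα.1 hα.2
    exact ⟨n, hn, hα⟩
  · rintro ⟨n, _, hα⟩
    exact hα
end
end
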